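/- arXiv:2208.12357 — 11 statements merged into one kernel-verified Lean document; each statement's English description precedes it below -/
import Mathlib

section
/- Let A be an invertible m×m real matrix, A_s a p×p real matrix, G a p×m real matrix, B a q×p real matrix, and suppose S₁ = A_s + G A⁻¹ Gᵀ is invertible; set S₂ = B S₁⁻¹ Bᵀ. Then det K = (−1)^p · det A · det S₁ · det S₂ for the double saddle-point matrix K = [[A, Gᵀ, 0], [G, −A_s, Bᵀ], [0, B, 0]]; in particular, K is invertible if and only if S₂ is invertible. -/
open Matrix

/-- Assemble a 3×3 block matrix from its nine blocks. -/
noncomputable def blk3 {m p q : Type*}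
    (M11 : Matrix m m ℝ) (M12 : Matrix m p ℝ) (M13 : Matrix m q ℝ)
    (M21 : Matrix p m ℝ) (M22 : Matrix p p ℝ) (M23 : Matrix p q ℝ)
    (M31 : Matrix q m ℝ) (M32 : Matrix q p ℝ) (M33 : Matrix q q ℝ) :
    Matrix (m ⊕ (p ⊕ q)) (m ⊕ (p ⊕ q)) ℝ :=
  Matrix.fromBlocks M11 (Matrix.fromCols M12 M13)
    (Matrix.fromRows M21 M31) (Matrix.fromBlocks M22 M23 M32 M33)

/-- `det K = (−1)^p · det A · det S₁ · det S₂`, and `K` is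
invertible iff `S₂` is invertible. -/
theorem stmt1 (m p q : ℕ)
    (A : Matrix (Fin m) (Fin m) ℝ) (As : Matrix (Fin p) (Fin p) ℝ)
    (G : Matrix (Fin p) (Fin m) ℝ) (B : Matrix (Fin q) (Fin p) ℝ)
    (S1 : Matrix (Fin p) (Fin p) ℝ) (S2 : Matrix (Fin q) (Fin q) ℝ)
    (hS1def : S1 = As + G * A⁻¹ * Gᵀ) (hS2def : S2 = B * S1⁻¹ * Bᵀ)
    (hA : IsUnit A) (hS1 : IsUnit S1)
    (K : Matrix (Fin m ⊕ (Fin p ⊕ Fin q)) (Fin m ⊕ (Fin p ⊕ Fin q)) ℝ)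
    (hK : K = blk3 A Gᵀ 0 G (-As) Bᵀ 0 B 0) :
    K.det = (-1 : ℝ) ^ p * A.det * S1.det * S2.det ∧ (IsUnit K ↔ IsUnit S2) := by
  haveI : Invertible A := hA.invertible
  haveI : Invertible S1 := hS1.invertible
  haveI : Invertible (-S1) := invertibleNeg S1
  have hprod : fromRows G 0 * A⁻¹ * fromCols Gᵀ 0
      = fromBlocks (G * A⁻¹ * Gᵀ) 0 0 (0 : Matrix (Fin q) (Fin q) ℝ) := by
    rw [fromRows_mul, fromRows_mul_fromCols]
    simp
  have hinv : (-S1)⁻¹ = -(S1⁻¹) := by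
    rw [Matrix.inv_eq_right_inv]
    simp [Matrix.mul_inv_of_invertible]
  have hdet : K.det = (-1 : ℝ) ^ p * A.det * S1.det * S2.det := by
    rw [hK, blk3, det_fromBlocks₁₁, invOf_eq_nonsing_inv, hprod,
      sub_eq_add_neg, fromBlocks_neg, fromBlocks_add]
    have e1 : -As + -(G * A⁻¹ * Gᵀ) = -S1 := by rw [hS1def]; abel
    rw [e1]
    simp only [add_neg_cancel_right, neg_zero, add_zero]
    rw [det_fromBlocks₁₁ (-S1), invOf_eq_nonsing_inv, hinv, det_neg, hS2def]
    simp only [Matrix.mul_neg, Matrix.neg_mul, zero_sub, neg_neg, Fintype.card_fin]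
    ring
  refine ⟨hdet, ?_⟩
  rw [Matrix.isUnit_iff_isUnit_det, Matrix.isUnit_iff_isUnit_det, isUnit_iff_ne_zero,
    isUnit_iff_ne_zero, hdet]
  have hAd : A.det ≠ 0 := by
    simpa [isUnit_iff_ne_zero] using (Matrix.isUnit_iff_isUnit_det A).mp hA
  have hS1d : S1.det ≠ 0 := by
    simpa [isUnit_iff_ne_zero] using (Matrix.isUnit_iff_isUnit_det S1).mp hS1
  have hsgn : ((-1 : ℝ) ^ p) ≠ 0 := by
    simp [pow_ne_zero]
  constructor
  · intro h hc; exact h (by simp [hc])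
  · intro h hc
    rcases mul_eq_zero.mp hc with hc | hc
    · rcases mul_eq_zero.mp hc with hc | hc
      · rcases mul_eq_zero.mp hc with hc | hc
        · exact hsgn hc
        · exact hAd hc
      · exact hS1d hc
    · exact h hc
end

section
/- Let A be an invertible m×m real matrix, A_s a p×p real matrix, G a p×m real matrix, B a q×p real matrix, and suppose S₁ = A_s + G A⁻¹ Gᵀ and S₂ = B S₁⁻¹ Bᵀ are invertible. Define the block lower-triangular preconditioner M₃ = [[A, 0, 0], [G, −S₁, 0], [0, B, S₂]]. Then M₃⁻¹ K equals the unit upper block-triangular matrix U = [[I, A⁻¹ Gᵀ, 0], [0, I, −S₁⁻¹ Bᵀ], [0, 0, I]]; consequently (M₃⁻¹K − I)³ = 0 and every (complex) eigenvalue of M₃⁻¹K equals 1. -/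
open Matrix

section aux
variable {m p q : Type*} [Fintype m] [Fintype p] [Fintype q]
  [DecidableEq m] [DecidableEq p] [DecidableEq q]

lemma blk3_mul (A11 : Matrix m m ℝ) (A12 : Matrix m p ℝ) (A13 : Matrix m q ℝ)
    (A21 : Matrix p m ℝ) (A22 : Matrix p p ℝ) (A23 : Matrix p q ℝ)
    (A31 : Matrix q m ℝ) (A32 : Matrix q p ℝ) (A33 : Matrix q q ℝ)
    (B11 : Matrix m m ℝ) (B12 : Matrix m p ℝ) (B13 : Matrix m q ℝ)
    (B21 : Matrix p m ℝ) (B22 : Matrix p p ℝ) (B23 : Matrix p q ℝ)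
    (B31 : Matrix q m ℝ) (B32 : Matrix q p ℝ) (B33 : Matrix q q ℝ) :
    blk3 A11 A12 A13 A21 A22 A23 A31 A32 A33 * blk3 B11 B12 B13 B21 B22 B23 B31 B32 B33 =
    blk3 (A11*B11 + A12*B21 + A13*B31) (A11*B12 + A12*B22 + A13*B32) (A11*B13 + A12*B23 + A13*B33)
      (A21*B11 + A22*B21 + A23*B31) (A21*B12 + A22*B22 + A23*B32) (A21*B13 + A22*B23 + A23*B33)
      (A31*B11 + A32*B21 + A33*B31) (A31*B12 + A32*B22 + A33*B32) (A31*B13 + A32*B23 + A33*B33) := by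
  ext (i | (i | i)) (j | (j | j)) <;>
    simp [blk3, fromBlocks, fromCols, mul_apply, Fintype.sum_sum_type,
      Finset.sum_add_distrib, add_assoc]

lemma blk3_one : blk3 (1 : Matrix m m ℝ) (0 : Matrix m p ℝ) (0 : Matrix m q ℝ)
    (0 : Matrix p m ℝ) (1 : Matrix p p ℝ) (0 : Matrix p q ℝ)
    (0 : Matrix q m ℝ) (0 : Matrix q p ℝ) (1 : Matrix q q ℝ) = 1 := by
  ext (i | (i | i)) (j | (j | j)) <;>
    simp [blk3, fromBlocks, fromCols, one_apply]

lemma blk3_sub (A11 : Matrix m m ℝ) (A12 : Matrix m p ℝ) (A13 : Matrix m q ℝ)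
    (A21 : Matrix p m ℝ) (A22 : Matrix p p ℝ) (A23 : Matrix p q ℝ)
    (A31 : Matrix q m ℝ) (A32 : Matrix q p ℝ) (A33 : Matrix q q ℝ)
    (B11 : Matrix m m ℝ) (B12 : Matrix m p ℝ) (B13 : Matrix m q ℝ)
    (B21 : Matrix p m ℝ) (B22 : Matrix p p ℝ) (B23 : Matrix p q ℝ)
    (B31 : Matrix q m ℝ) (B32 : Matrix q p ℝ) (B33 : Matrix q q ℝ) :
    blk3 A11 A12 A13 A21 A22 A23 A31 A32 A33 - blk3 B11 B12 B13 B21 B22 B23 B31 B32 B33 =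
    blk3 (A11-B11) (A12-B12) (A13-B13) (A21-B21) (A22-B22) (A23-B23)
      (A31-B31) (A32-B32) (A33-B33) := by
  ext (i | (i | i)) (j | (j | j)) <;> simp [blk3, fromBlocks, fromCols]

lemma blk3_zero : blk3 (0 : Matrix m m ℝ) (0 : Matrix m p ℝ) (0 : Matrix m q ℝ)
    (0 : Matrix p m ℝ) (0 : Matrix p p ℝ) (0 : Matrix p q ℝ)
    (0 : Matrix q m ℝ) (0 : Matrix q p ℝ) (0 : Matrix q q ℝ) = 0 := by
  ext (i | (i | i)) (j | (j | j)) <;> simp [blk3, fromBlocks, fromCols]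

end aux

/-- `M₃⁻¹ K` equals the unit upper block-triangular factor `U`,
`(M₃⁻¹K − I)³ = 0`, and every complex eigenvalue of `M₃⁻¹K` equals 1. -/
theorem stmt2 (m p q : ℕ)
    (A : Matrix (Fin m) (Fin m) ℝ) (As : Matrix (Fin p) (Fin p) ℝ)
    (G : Matrix (Fin p) (Fin m) ℝ) (B : Matrix (Fin q) (Fin p) ℝ)
    (S1 : Matrix (Fin p) (Fin p) ℝ) (S2 : Matrix (Fin q) (Fin q) ℝ)
    (hS1def : S1 = As + G * A⁻¹ * Gᵀ) (hS2def : S2 = B * S1⁻¹ * Bᵀ)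
    (hA : IsUnit A) (hS1 : IsUnit S1) (hS2 : IsUnit S2)
    (K M3 : Matrix (Fin m ⊕ (Fin p ⊕ Fin q)) (Fin m ⊕ (Fin p ⊕ Fin q)) ℝ)
    (hK : K = blk3 A Gᵀ 0 G (-As) Bᵀ 0 B 0)
    (hM3 : M3 = blk3 A 0 0 G (-S1) 0 0 B S2) :
    M3⁻¹ * K = blk3 1 (A⁻¹ * Gᵀ) 0 0 1 (-(S1⁻¹ * Bᵀ)) 0 0 1 ∧
    (M3⁻¹ * K - 1) ^ 3 = 0 ∧
    ∀ μ : ℂ,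
      (μ • (1 : Matrix (Fin m ⊕ (Fin p ⊕ Fin q)) (Fin m ⊕ (Fin p ⊕ Fin q)) ℂ) -
          (M3⁻¹ * K).map Complex.ofReal).det = 0 → μ = 1 := by
  have hAd : IsUnit A.det := (isUnit_iff_isUnit_det A).mp hA
  have hS1d : IsUnit S1.det := (isUnit_iff_isUnit_det S1).mp hS1
  have hS2d : IsUnit S2.det := (isUnit_iff_isUnit_det S2).mp hS2
  set U := blk3 (1 : Matrix (Fin m) (Fin m) ℝ) (A⁻¹ * Gᵀ) 0 0 1 (-(S1⁻¹ * Bᵀ)) 0 0 1 with hU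
  -- M3 * U = K
  have hMU : M3 * U = K := by
    rw [hM3, hU, blk3_mul]
    simp only [Matrix.mul_one, Matrix.mul_zero, Matrix.zero_mul, Matrix.one_mul,
      add_zero, zero_add, Matrix.mul_neg, Matrix.neg_mul, neg_neg, neg_zero]
    rw [← Matrix.mul_assoc A, Matrix.mul_nonsing_inv A hAd, Matrix.one_mul,
      ← Matrix.mul_assoc S1, Matrix.mul_nonsing_inv S1 hS1d, Matrix.one_mul,
      ← Matrix.mul_assoc G, ← Matrix.mul_assoc B]
    have e1 : G * A⁻¹ * Gᵀ + -S1 = -As := by rw [hS1def]; abel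
    have e2 : -(B * S1⁻¹ * Bᵀ) + S2 = 0 := by rw [hS2def]; exact neg_add_cancel _
    rw [e1, e2, hK]
  -- det M3 is a unit
  have hM3d : IsUnit M3.det := by
    rw [hM3]
    unfold blk3
    rw [show (fromCols (0 : Matrix (Fin m) (Fin p) ℝ) (0 : Matrix (Fin m) (Fin q) ℝ)) = 0
      from fromCols_zero, det_fromBlocks_zero₁₂, det_fromBlocks_zero₁₂]
    exact hAd.mul (((isUnit_iff_isUnit_det _).mp hS1.neg).mul hS2d)
  have hinv : M3⁻¹ * K = U := by
    rw [← hMU, ← Matrix.mul_assoc, Matrix.nonsing_inv_mul M3 hM3d, Matrix.one_mul]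
  refine ⟨hinv, ?_, ?_⟩
  · rw [hinv]
    have h1 : U - 1 = blk3 0 (A⁻¹ * Gᵀ) 0 0 0 (-(S1⁻¹ * Bᵀ)) 0 0 0 := by
      rw [hU, ← blk3_one, blk3_sub]; congr 1 <;> simp
    have h2 : (U - 1) * (U - 1) = blk3 0 0 (A⁻¹ * Gᵀ * -(S1⁻¹ * Bᵀ)) 0 0 0 0 0 0 := by
      rw [h1, blk3_mul]; congr 1 <;> simp
    have h3 : (U - 1) * (U - 1) * (U - 1) = 0 := by
      rw [h2, h1, blk3_mul, ← blk3_zero]; congr 1 <;> simp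
    calc (U - 1) ^ 3 = (U - 1) * (U - 1) * (U - 1) := by rw [pow_succ, sq]
      _ = 0 := h3
  · intro μ hμ
    rw [hinv] at hμ
    have hone : ∀ (n : Type) [Fintype n] [DecidableEq n],
        ((1 : Matrix n n ℝ)).map Complex.ofReal = 1 := by
      intro n _ _
      ext i j
      by_cases h : i = j <;> simp [one_apply, h]
    have hmap : U.map Complex.ofReal =
        fromBlocks (1 : Matrix (Fin m) (Fin m) ℂ)
          ((fromCols (A⁻¹ * Gᵀ) (0 : Matrix (Fin m) (Fin q) ℝ)).map Complex.ofReal)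
          0 (fromBlocks (1 : Matrix (Fin p) (Fin p) ℂ)
            ((-(S1⁻¹ * Bᵀ)).map Complex.ofReal) 0 1) := by
      rw [hU]
      ext (i | (i | i)) (j | (j | j)) <;>
        simp [blk3, fromBlocks, fromCols, one_apply, Matrix.map_apply,
          apply_ite Complex.ofReal]
    rw [hmap] at hμ
    have hsmul : μ • (1 : Matrix (Fin m ⊕ (Fin p ⊕ Fin q)) (Fin m ⊕ (Fin p ⊕ Fin q)) ℂ) =
        fromBlocks (μ • (1 : Matrix (Fin m) (Fin m) ℂ)) 0 0
          (fromBlocks (μ • (1 : Matrix (Fin p) (Fin p) ℂ)) 0 0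
            (μ • (1 : Matrix (Fin q) (Fin q) ℂ))) := by
      rw [← fromBlocks_one, ← fromBlocks_one (l := Fin p), fromBlocks_smul, fromBlocks_smul]
      simp
    rw [hsmul] at hμ
    have hsub : ∀ {α β : Type} [Fintype α] [Fintype β] [DecidableEq α] [DecidableEq β]
        (a : Matrix α α ℂ) (b : Matrix α β ℂ) (c : Matrix β α ℂ) (d : Matrix β β ℂ)
        (e : Matrix α α ℂ) (f : Matrix α β ℂ) (g : Matrix β α ℂ) (h : Matrix β β ℂ),
        fromBlocks a b c d - fromBlocks e f g h =
          fromBlocks (a - e) (b - f) (c - g) (d - h) := by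
      intro α β _ _ _ _ a b c d e f g h
      ext (i | i) (j | j) <;> simp [fromBlocks]
    rw [hsub, hsub] at hμ
    simp only [zero_sub, sub_zero] at hμ
    rw [det_fromBlocks_zero₂₁, det_fromBlocks_zero₂₁] at hμ
    have hdet : ∀ (n : ℕ), (μ • (1 : Matrix (Fin n) (Fin n) ℂ) - 1).det = (μ - 1) ^ n := by
      intro n
      have : μ • (1 : Matrix (Fin n) (Fin n) ℂ) - 1 = (μ - 1) • 1 := by
        rw [sub_smul, one_smul]
      rw [this, det_smul, det_one, mul_one, Fintype.card_fin]
    rw [hdet, hdet, hdet] at hμ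
    by_contra hne
    have hz : μ - 1 ≠ 0 := sub_ne_zero.mpr hne
    exact (mul_ne_zero (pow_ne_zero _ hz)
      (mul_ne_zero (pow_ne_zero _ hz) (pow_ne_zero _ hz))) hμ
end

section
/- Let A be an invertible m×m real matrix, A_s a p×p real matrix, G a p×m real matrix, B a q×p real matrix, and suppose S₁ = A_s + G A⁻¹ Gᵀ and S₂ = B S₁⁻¹ Bᵀ are invertible. Define M₂ = [[A, 0, 0], [G, S₁, 0], [0, 0, S₂]]. Let λ ∈ ℝ satisfy λ² + λ − 1 = 0 (i.e., λ = (−1 ± √5)/2). Then for every nonzero z ∈ ℝ^q, the vector (x, y, z) with y = (1 + λ)⁻¹ S₁⁻¹ Bᵀ z and x = (λ − 1)⁻¹ A⁻¹ Gᵀ y is an eigenvector of M₂⁻¹K with eigenvalue λ; consequently each of the two eigenvalues (−1 ± √5)/2 of M₂⁻¹K has geometric multiplicity at least q. -/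
open Matrix

/-- for `λ` with `λ² + λ − 1 = 0` and any nonzero `z`, the vector
`(x, y, z)` with `y = (1+λ)⁻¹ S₁⁻¹ Bᵀ z` and `x = (λ−1)⁻¹ A⁻¹ Gᵀ y` is an
eigenvector of `M₂⁻¹K` with eigenvalue `λ`; hence the geometric multiplicity of
each of the eigenvalues `(−1 ± √5)/2` is at least `q`. -/
theorem stmt5 (m p q : ℕ)
    (A : Matrix (Fin m) (Fin m) ℝ) (As : Matrix (Fin p) (Fin p) ℝ)
    (G : Matrix (Fin p) (Fin m) ℝ) (B : Matrix (Fin q) (Fin p) ℝ)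
    (S1 : Matrix (Fin p) (Fin p) ℝ) (S2 : Matrix (Fin q) (Fin q) ℝ)
    (hS1def : S1 = As + G * A⁻¹ * Gᵀ) (hS2def : S2 = B * S1⁻¹ * Bᵀ)
    (hA : IsUnit A) (hS1 : IsUnit S1) (hS2 : IsUnit S2)
    (K M2 : Matrix (Fin m ⊕ (Fin p ⊕ Fin q)) (Fin m ⊕ (Fin p ⊕ Fin q)) ℝ)
    (hK : K = blk3 A Gᵀ 0 G (-As) Bᵀ 0 B 0)
    (hM2 : M2 = blk3 A 0 0 G S1 0 0 0 S2)
    (lam : ℝ) (hlam : lam ^ 2 + lam - 1 = 0) :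
    (∀ z : Fin q → ℝ, z ≠ 0 →
      ∀ y : Fin p → ℝ, y = (1 + lam)⁻¹ • ((S1⁻¹ * Bᵀ) *ᵥ z) →
      ∀ x : Fin m → ℝ, x = (lam - 1)⁻¹ • ((A⁻¹ * Gᵀ) *ᵥ y) →
        Sum.elim x (Sum.elim y z) ≠ 0 ∧
        (M2⁻¹ * K) *ᵥ Sum.elim x (Sum.elim y z) = lam • Sum.elim x (Sum.elim y z)) ∧
    q ≤ Module.finrank ℝ (LinearMap.ker (M2⁻¹ * K - lam • 1).mulVecLin) := by
  -- scalar facts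
  have hl1 : lam - 1 ≠ 0 := by
    intro h
    have : lam = 1 := by linarith [sub_eq_zero.mp h]
    rw [this] at hlam; norm_num at hlam
  have hl2 : 1 + lam ≠ 0 := by
    intro h
    have : lam = -1 := by linarith
    rw [this] at hlam; norm_num at hlam
  have hAdet : IsUnit A.det := (Matrix.isUnit_iff_isUnit_det A).mp hA
  have hS1det : IsUnit S1.det := (Matrix.isUnit_iff_isUnit_det S1).mp hS1
  have hS2det : IsUnit S2.det := (Matrix.isUnit_iff_isUnit_det S2).mp hS2
  -- M2 is invertible
  have hcol0 : Matrix.fromCols (0 : Matrix (Fin m) (Fin p) ℝ)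
      (0 : Matrix (Fin m) (Fin q) ℝ) = 0 := by
    ext i j; cases j <;> simp
  have hM2det : IsUnit M2.det := by
    rw [hM2, blk3, hcol0, Matrix.det_fromBlocks_zero₁₂, Matrix.det_fromBlocks_zero₁₂]
    exact (hAdet.mul (hS1det.mul hS2det))
  -- main eigenvector computation (for arbitrary z)
  have hmain : ∀ z : Fin q → ℝ,
      ∀ y : Fin p → ℝ, y = (1 + lam)⁻¹ • ((S1⁻¹ * Bᵀ) *ᵥ z) →
      ∀ x : Fin m → ℝ, x = (lam - 1)⁻¹ • ((A⁻¹ * Gᵀ) *ᵥ y) →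
      (M2⁻¹ * K) *ᵥ Sum.elim x (Sum.elim y z) = lam • Sum.elim x (Sum.elim y z) := by
    intro z y hy x hx
    have e1 : A *ᵥ x = (lam - 1)⁻¹ • (Gᵀ *ᵥ y) := by
      rw [hx, Matrix.mulVec_smul, Matrix.mulVec_mulVec, ← Matrix.mul_assoc,
        Matrix.mul_nonsing_inv A hAdet, Matrix.one_mul]
    have e2 : S1 *ᵥ y = (1 + lam)⁻¹ • (Bᵀ *ᵥ z) := by
      rw [hy, Matrix.mulVec_smul, Matrix.mulVec_mulVec, ← Matrix.mul_assoc,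
        Matrix.mul_nonsing_inv S1 hS1det, Matrix.one_mul]
    have e2' : Bᵀ *ᵥ z = (1 + lam) • (S1 *ᵥ y) := by
      rw [e2, smul_smul, mul_inv_cancel₀ hl2, one_smul]
    have e3 : G *ᵥ x = (lam - 1)⁻¹ • ((S1 - As) *ᵥ y) := by
      rw [hx, Matrix.mulVec_smul, Matrix.mulVec_mulVec]
      congr 2
      rw [hS1def, ← Matrix.mul_assoc, add_sub_cancel_left]
    have e4 : B *ᵥ y = (1 + lam)⁻¹ • (S2 *ᵥ z) := by
      rw [hy, Matrix.mulVec_smul, Matrix.mulVec_mulVec, hS2def, Matrix.mul_assoc]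
    have hb1 : A *ᵥ x + Gᵀ *ᵥ y = lam • (A *ᵥ x) := by
      rw [e1]; match_scalars; field_simp; ring
    have hb2 : G *ᵥ x + ((-As) *ᵥ y + Bᵀ *ᵥ z)
        = lam • (G *ᵥ x) + lam • (S1 *ᵥ y) := by
      rw [e3, e2', Matrix.sub_mulVec, Matrix.neg_mulVec]
      match_scalars <;> field_simp <;> linarith [hlam]
    have hb3 : B *ᵥ y = lam • (S2 *ᵥ z) := by
      rw [e4]; match_scalars; field_simp; linarith [hlam]
    have hsmul : lam • Sum.elim x (Sum.elim y z)
        = Sum.elim (lam • x) (Sum.elim (lam • y) (lam • z)) := by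
      funext i; rcases i with i | i
      · rfl
      · rcases i <;> rfl
    have hKv : K *ᵥ Sum.elim x (Sum.elim y z)
        = M2 *ᵥ (lam • Sum.elim x (Sum.elim y z)) := by
      rw [hK, hM2, blk3, blk3, hsmul]
      simp only [Matrix.fromBlocks_mulVec, Matrix.fromRows_mulVec,
        Matrix.fromCols_mulVec_sumElim, Matrix.zero_mulVec, add_zero, zero_add,
        Matrix.mulVec_smul]
      funext i
      rcases i with i | i
      · simpa [Matrix.mulVec_smul] using congrFun hb1 i
      · rcases i with i | i
        · simpa [Matrix.mulVec_smul] using congrFun hb2 i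
        · simpa [Matrix.mulVec_smul] using congrFun hb3 i
    calc (M2⁻¹ * K) *ᵥ Sum.elim x (Sum.elim y z)
        = M2⁻¹ *ᵥ (K *ᵥ Sum.elim x (Sum.elim y z)) := by
          rw [← Matrix.mulVec_mulVec]
      _ = M2⁻¹ *ᵥ (M2 *ᵥ (lam • Sum.elim x (Sum.elim y z))) := by rw [hKv]
      _ = (M2⁻¹ * M2) *ᵥ (lam • Sum.elim x (Sum.elim y z)) := by
          rw [Matrix.mulVec_mulVec]
      _ = lam • Sum.elim x (Sum.elim y z) := by
          rw [Matrix.nonsing_inv_mul M2 hM2det, Matrix.one_mulVec]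
  constructor
  · intro z hz y hy x hx
    refine ⟨?_, hmain z y hy x hx⟩
    intro h
    apply hz
    funext i
    simpa using congrFun h (Sum.inr (Sum.inr i))
  · -- geometric multiplicity
    set Y : Matrix (Fin p) (Fin q) ℝ := (1 + lam)⁻¹ • (S1⁻¹ * Bᵀ) with hY
    set X : Matrix (Fin m) (Fin q) ℝ := (lam - 1)⁻¹ • (A⁻¹ * Gᵀ * Y) with hX
    set P : Matrix (Fin m ⊕ (Fin p ⊕ Fin q)) (Fin q) ℝ :=
      Matrix.fromRows X (Matrix.fromRows Y 1) with hP
    have hPz : ∀ z : Fin q → ℝ,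
        P *ᵥ z = Sum.elim (X *ᵥ z) (Sum.elim (Y *ᵥ z) z) := by
      intro z
      rw [hP, Matrix.fromRows_mulVec, Matrix.fromRows_mulVec, Matrix.one_mulVec]
    have hker : ∀ z : Fin q → ℝ,
        P.mulVecLin z ∈ LinearMap.ker (M2⁻¹ * K - lam • 1).mulVecLin := by
      intro z
      have hy : Y *ᵥ z = (1 + lam)⁻¹ • ((S1⁻¹ * Bᵀ) *ᵥ z) := by
        rw [hY, Matrix.smul_mulVec]
      have hx : X *ᵥ z = (lam - 1)⁻¹ • ((A⁻¹ * Gᵀ) *ᵥ (Y *ᵥ z)) := by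
        rw [hX, Matrix.smul_mulVec, Matrix.mulVec_mulVec]
      have := hmain z (Y *ᵥ z) hy (X *ᵥ z) hx
      simp only [LinearMap.mem_ker, Matrix.mulVecLin_apply, hPz z,
        Matrix.sub_mulVec, Matrix.smul_mulVec, Matrix.one_mulVec, this,
        sub_self]
    have hinj : Function.Injective P.mulVecLin := by
      intro z1 z2 h
      funext i
      have := congrFun h (Sum.inr (Sum.inr i))
      simpa [Matrix.mulVecLin_apply, hPz] using this
    let L : (Fin q → ℝ) →ₗ[ℝ] LinearMap.ker (M2⁻¹ * K - lam • 1).mulVecLin :=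
      LinearMap.codRestrict _ P.mulVecLin hker
    have hLinj : Function.Injective L := by
      intro z1 z2 h
      exact hinj (Subtype.ext_iff.mp h)
    calc q = Module.finrank ℝ (Fin q → ℝ) := Module.finrank_fin_fun ℝ |>.symm
      _ ≤ Module.finrank ℝ (LinearMap.ker (M2⁻¹ * K - lam • 1).mulVecLin) :=
        LinearMap.finrank_le_finrank_of_injective hLinj
end

section
/- Let A be an invertible m×m real matrix, A_s a p×p real matrix, G a p×m real matrix, B a q×p real matrix, and suppose S₁ = A_s + G A⁻¹ Gᵀ and S₂ = B S₁⁻¹ Bᵀ are invertible. Define M₂ = [[A, 0, 0], [G, S₁, 0], [0, 0, S₂]]. Then for every nonzero y ∈ ℝ^p with B y = 0, the vector (−(1/2) A⁻¹ Gᵀ y, y, 0) is an eigenvector of M₂⁻¹K with eigenvalue −1; consequently the geometric multiplicity of the eigenvalue −1 of M₂⁻¹K is at least p − rank(B). -/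
open Matrix

/-- for every nonzero `y` with `B y = 0`, the vector
`(−(1/2) A⁻¹ Gᵀ y, y, 0)` is an eigenvector of `M₂⁻¹K` with eigenvalue `−1`;
hence the geometric multiplicity of the eigenvalue `−1` is at least
`p − rank B`. -/
theorem stmt6 (m p q : ℕ)
    (A : Matrix (Fin m) (Fin m) ℝ) (As : Matrix (Fin p) (Fin p) ℝ)
    (G : Matrix (Fin p) (Fin m) ℝ) (B : Matrix (Fin q) (Fin p) ℝ)
    (S1 : Matrix (Fin p) (Fin p) ℝ) (S2 : Matrix (Fin q) (Fin q) ℝ)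
    (hS1def : S1 = As + G * A⁻¹ * Gᵀ) (hS2def : S2 = B * S1⁻¹ * Bᵀ)
    (hA : IsUnit A) (hS1 : IsUnit S1) (hS2 : IsUnit S2)
    (K M2 : Matrix (Fin m ⊕ (Fin p ⊕ Fin q)) (Fin m ⊕ (Fin p ⊕ Fin q)) ℝ)
    (hK : K = blk3 A Gᵀ 0 G (-As) Bᵀ 0 B 0)
    (hM2 : M2 = blk3 A 0 0 G S1 0 0 0 S2) :
    (∀ y : Fin p → ℝ, y ≠ 0 → B *ᵥ y = 0 →
      (M2⁻¹ * K) *ᵥ Sum.elim (-(1 / 2 : ℝ) • ((A⁻¹ * Gᵀ) *ᵥ y)) (Sum.elim y (0 : Fin q → ℝ)) =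
        (-1 : ℝ) • Sum.elim (-(1 / 2 : ℝ) • ((A⁻¹ * Gᵀ) *ᵥ y)) (Sum.elim y (0 : Fin q → ℝ)) ∧
      Sum.elim (-(1 / 2 : ℝ) • ((A⁻¹ * Gᵀ) *ᵥ y)) (Sum.elim y (0 : Fin q → ℝ)) ≠ 0) ∧
    p - B.rank ≤
      Module.finrank ℝ (LinearMap.ker (M2⁻¹ * K - (-1 : ℝ) • 1).mulVecLin) := by
  have hAdet : IsUnit A.det := (Matrix.isUnit_iff_isUnit_det A).mp hA
  have hAAinv : A * A⁻¹ = 1 := Matrix.mul_nonsing_inv A hAdet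
  -- M2 is invertible
  have hcols : (Matrix.fromCols (0 : Matrix (Fin m) (Fin p) ℝ)
      (0 : Matrix (Fin m) (Fin q) ℝ)) = 0 := by
    ext _ j; cases j <;> rfl
  have hM2unit : IsUnit M2 := by
    rw [Matrix.isUnit_iff_isUnit_det, hM2, blk3, hcols,
      Matrix.det_fromBlocks_zero₁₂, Matrix.det_fromBlocks_zero₁₂]
    exact hAdet.mul (((Matrix.isUnit_iff_isUnit_det S1).mp hS1).mul
      ((Matrix.isUnit_iff_isUnit_det S2).mp hS2))
  have hM2inv : M2⁻¹ * M2 = 1 :=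
    Matrix.nonsing_inv_mul M2 ((Matrix.isUnit_iff_isUnit_det M2).mp hM2unit)
  -- the eigenvector equation, for all y in the kernel of B
  have key : ∀ y : Fin p → ℝ, B *ᵥ y = 0 →
      (M2⁻¹ * K) *ᵥ Sum.elim (-(1 / 2 : ℝ) • ((A⁻¹ * Gᵀ) *ᵥ y)) (Sum.elim y (0 : Fin q → ℝ)) =
        (-1 : ℝ) • Sum.elim (-(1 / 2 : ℝ) • ((A⁻¹ * Gᵀ) *ᵥ y)) (Sum.elim y (0 : Fin q → ℝ)) := by
    intro y hy
    have hneg : (-1 : ℝ) • Sum.elim (-(1 / 2 : ℝ) • ((A⁻¹ * Gᵀ) *ᵥ y))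
          (Sum.elim y (0 : Fin q → ℝ)) =
        Sum.elim (-(-(1 / 2 : ℝ) • ((A⁻¹ * Gᵀ) *ᵥ y)))
          (Sum.elim (-y) (0 : Fin q → ℝ)) := by
      funext i
      rcases i with i | j | k <;> simp
    have hKM : K *ᵥ Sum.elim (-(1 / 2 : ℝ) • ((A⁻¹ * Gᵀ) *ᵥ y)) (Sum.elim y (0 : Fin q → ℝ)) =
        M2 *ᵥ Sum.elim (-(-(1 / 2 : ℝ) • ((A⁻¹ * Gᵀ) *ᵥ y)))
          (Sum.elim (-y) (0 : Fin q → ℝ)) := by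
      have h1 : A *ᵥ ((A⁻¹ * Gᵀ) *ᵥ y) = Gᵀ *ᵥ y := by
        rw [Matrix.mulVec_mulVec, ← Matrix.mul_assoc, hAAinv, Matrix.one_mul]
      have h2 : G *ᵥ ((A⁻¹ * Gᵀ) *ᵥ y) = (G * A⁻¹ * Gᵀ) *ᵥ y := by
        rw [Matrix.mulVec_mulVec, Matrix.mul_assoc]
      subst hK hM2 hS1def
      funext i
      rcases i with i | j | k <;>
        simp [blk3, Matrix.fromBlocks_mulVec, Matrix.fromCols_mulVec_sumElim,
          Matrix.fromRows_mulVec, Matrix.mulVec_smul, Matrix.add_mulVec, hy, h1, h2,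
          Matrix.neg_mulVec, Matrix.mulVec_neg, Matrix.mul_assoc] <;> ring
    rw [← Matrix.mulVec_mulVec, hKM, Matrix.mulVec_mulVec, hM2inv, Matrix.one_mulVec, hneg]
  -- nonzeroness of the candidate eigenvector
  have hnz : ∀ y : Fin p → ℝ, y ≠ 0 →
      Sum.elim (-(1 / 2 : ℝ) • ((A⁻¹ * Gᵀ) *ᵥ y)) (Sum.elim y (0 : Fin q → ℝ)) ≠ 0 := by
    intro y hy h
    apply hy
    funext i
    have := congrFun h (Sum.inr (Sum.inl i))
    simpa using this
  refine ⟨fun y hy hBy => ⟨key y hBy, hnz y hy⟩, ?_⟩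
  -- the linear map y ↦ (−(1/2) A⁻¹ Gᵀ y, y, 0)
  let L : (Fin p → ℝ) →ₗ[ℝ] (Fin m ⊕ (Fin p ⊕ Fin q) → ℝ) :=
    { toFun := fun y =>
        Sum.elim (-(1 / 2 : ℝ) • ((A⁻¹ * Gᵀ) *ᵥ y)) (Sum.elim y (0 : Fin q → ℝ))
      map_add' := by
        intro a b
        funext i
        rcases i with i | j | k <;> simp [Matrix.mulVec_add, smul_add]
      map_smul' := by
        intro c a
        funext i
        rcases i with i | j | k <;>
          simp [Matrix.mulVec_smul, smul_smul] <;> ring }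
  have hmem : ∀ x : LinearMap.ker B.mulVecLin,
      L x ∈ LinearMap.ker (M2⁻¹ * K - (-1 : ℝ) • 1).mulVecLin := by
    rintro ⟨y, hy⟩
    have hBy : B *ᵥ y = 0 := hy
    have := key y hBy
    simp only [LinearMap.mem_ker, Matrix.mulVecLin_apply, Matrix.sub_mulVec,
      Matrix.smul_mulVec, Matrix.one_mulVec]
    show (M2⁻¹ * K) *ᵥ (L y) - (-1 : ℝ) • (L y) = 0
    have hLy : L y = Sum.elim (-(1 / 2 : ℝ) • ((A⁻¹ * Gᵀ) *ᵥ y))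
        (Sum.elim y (0 : Fin q → ℝ)) := rfl
    rw [hLy, this, sub_self]
  let f : LinearMap.ker B.mulVecLin →ₗ[ℝ]
      LinearMap.ker (M2⁻¹ * K - (-1 : ℝ) • 1).mulVecLin :=
    (L.comp (LinearMap.ker B.mulVecLin).subtype).codRestrict _ hmem
  have hfinj : Function.Injective f := by
    intro a b hab
    ext1
    have h : L a.1 = L b.1 := congrArg Subtype.val hab
    funext i
    have := congrFun h (Sum.inr (Sum.inl i))
    simpa [L] using this
  have hle : Module.finrank ℝ (LinearMap.ker B.mulVecLin) ≤
      Module.finrank ℝ (LinearMap.ker (M2⁻¹ * K - (-1 : ℝ) • 1).mulVecLin) :=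
    LinearMap.finrank_le_finrank_of_injective hfinj
  have hrn := LinearMap.finrank_range_add_finrank_ker B.mulVecLin
  have hdim : Module.finrank ℝ (Fin p → ℝ) = p := by simp
  have hrank : B.rank = Module.finrank ℝ (LinearMap.range B.mulVecLin) := rfl
  omega
end

section
/- Let A be an invertible m×m real matrix, A_s a p×p real matrix, G a p×m real matrix, B a q×p real matrix, and suppose S₁ = A_s + G A⁻¹ Gᵀ and S₂ = B S₁⁻¹ Bᵀ are invertible (so q ≤ p). Define the preconditioner M̃₂ = [[A, 0, 0], [G, −S₁, 0], [0, 0, S₂]]. Then the characteristic polynomial of M̃₂⁻¹K is det(λI − M̃₂⁻¹K) = (λ − 1)^{m+p−q} · (λ² − λ + 1)^q; equivalently, the eigenvalue 1 of M̃₂⁻¹K has algebraic multiplicity m + p − q, and the complex eigenvalues (1 ± i√3)/2 each have algebraic multiplicity q. -/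
open Matrix Polynomial

section Aux

variable {m p q : Type*} [Fintype m] [Fintype p] [Fintype q]
  [DecidableEq m] [DecidableEq p] [DecidableEq q]

lemma fromColumns_add {R M N₁ N₂ : Type*} [Add R] (A₁ C₁ : Matrix M N₁ R) (A₂ C₂ : Matrix M N₂ R) :
    fromCols A₁ A₂ + fromCols C₁ C₂ = fromCols (A₁ + C₁) (A₂ + C₂) := by
  ext _ (_ | _) <;> simp [fromCols, Matrix.add_apply]

lemma fromRows_add {R M₁ M₂ N : Type*} [Add R] (A₁ C₁ : Matrix M₁ N R) (A₂ C₂ : Matrix M₂ N R) :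
    fromRows A₁ A₂ + fromRows C₁ C₂ = fromRows (A₁ + C₁) (A₂ + C₂) := by
  ext (_ | _) _ <;> rfl

lemma blk3_mul_s7
    (M11 : Matrix m m ℝ) (M12 : Matrix m p ℝ) (M13 : Matrix m q ℝ)
    (M21 : Matrix p m ℝ) (M22 : Matrix p p ℝ) (M23 : Matrix p q ℝ)
    (M31 : Matrix q m ℝ) (M32 : Matrix q p ℝ) (M33 : Matrix q q ℝ)
    (N11 : Matrix m m ℝ) (N12 : Matrix m p ℝ) (N13 : Matrix m q ℝ)
    (N21 : Matrix p m ℝ) (N22 : Matrix p p ℝ) (N23 : Matrix p q ℝ)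
    (N31 : Matrix q m ℝ) (N32 : Matrix q p ℝ) (N33 : Matrix q q ℝ) :
    blk3 M11 M12 M13 M21 M22 M23 M31 M32 M33 * blk3 N11 N12 N13 N21 N22 N23 N31 N32 N33
      = blk3 (M11*N11 + (M12*N21 + M13*N31)) (M11*N12 + (M12*N22 + M13*N32))
          (M11*N13 + (M12*N23 + M13*N33))
          (M21*N11 + (M22*N21 + M23*N31)) (M21*N12 + (M22*N22 + M23*N32))
          (M21*N13 + (M22*N23 + M23*N33))
          (M31*N11 + (M32*N21 + M33*N31)) (M31*N12 + (M32*N22 + M33*N32))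
          (M31*N13 + (M32*N23 + M33*N33)) := by
  simp only [blk3, fromBlocks_multiply, fromCols_mul_fromRows, mul_fromCols,
    fromCols_mul_fromBlocks, fromRows_mul, fromBlocks_mul_fromRows, fromRows_mul_fromCols,
    fromColumns_add, fromRows_add, fromBlocks_add, fromCols_fromRows_eq_fromBlocks]

lemma det_blk3_lower (X11 : Matrix m m ℝ) (X12 : Matrix m p ℝ) (X13 : Matrix m q ℝ)
    (X22 : Matrix p p ℝ) (X23 : Matrix p q ℝ) (X32 : Matrix q p ℝ) (X33 : Matrix q q ℝ) :
    (blk3 X11 X12 X13 0 X22 X23 0 X32 X33).det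
      = X11.det * (fromBlocks X22 X23 X32 X33).det := by
  rw [blk3, fromRows_zero, Matrix.det_fromBlocks_zero₂₁]

lemma eval_charpoly' {n : Type*} [DecidableEq n] [Fintype n] (M : Matrix n n ℝ) (t : ℝ) :
    M.charpoly.eval t = (t • (1 : Matrix n n ℝ) - M).det := by
  rw [Matrix.charpoly, ← Polynomial.coe_evalRingHom, RingHom.map_det]
  congr 1
  ext i j
  by_cases h : i = j <;>
    simp [h, Matrix.charmatrix_apply, Matrix.diagonal_apply, Matrix.one_apply,
      Matrix.sub_apply, Matrix.smul_apply, Matrix.map_apply]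

end Aux

lemma key_split {m p q : ℕ} (t : ℝ) (W : Matrix (Fin m) (Fin p) ℝ)
    (Y : Matrix (Fin p) (Fin q) ℝ) (Z : Matrix (Fin q) (Fin p) ℝ) :
    t • (1 : Matrix (Fin m ⊕ (Fin p ⊕ Fin q)) (Fin m ⊕ (Fin p ⊕ Fin q)) ℝ)
        - blk3 1 W 0 0 1 (-Y) 0 Z 0
      = blk3 (t • 1 - 1) (-W) 0 0 (t • 1 - 1) Y 0 (-Z) (t • 1) := by
  ext (i | i | i) (j | j | j) <;>
    simp [blk3, Matrix.fromBlocks, Matrix.fromCols, Matrix.fromRows_apply_inl, Matrix.fromRows_apply_inr, Matrix.one_apply]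

lemma det_aux {m p q : ℕ} (W : Matrix (Fin m) (Fin p) ℝ)
    (Y : Matrix (Fin p) (Fin q) ℝ) (Z : Matrix (Fin q) (Fin p) ℝ)
    (hZY : Z * Y = 1) (hqp : q ≤ p) (t : ℝ) (ht0 : t ≠ 0) (ht1 : t ≠ 1) :
    (t • (1 : Matrix (Fin m ⊕ (Fin p ⊕ Fin q)) (Fin m ⊕ (Fin p ⊕ Fin q)) ℝ)
        - blk3 1 W 0 0 1 (-Y) 0 Z 0).det
      = (t - 1) ^ (m + p - q) * (t ^ 2 - t + 1) ^ q := by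
  have ht1' : t - 1 ≠ 0 := sub_ne_zero.mpr ht1
  rw [key_split, det_blk3_lower]
  have hsm : ∀ (n : ℕ), (t • 1 - 1 : Matrix (Fin n) (Fin n) ℝ) = (t - 1) • 1 := by
    intro n; rw [sub_smul, one_smul]
  haveI hinv : Invertible (t • (1 : Matrix (Fin q) (Fin q) ℝ)) :=
    ⟨t⁻¹ • 1, by
      simp [Matrix.smul_mul, Matrix.mul_smul, smul_smul, inv_mul_cancel₀ ht0,
        mul_inv_cancel₀ ht0], by
      simp [Matrix.smul_mul, Matrix.mul_smul, smul_smul, inv_mul_cancel₀ ht0,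
        mul_inv_cancel₀ ht0]⟩
  have hInvOf : ⅟(t • (1 : Matrix (Fin q) (Fin q) ℝ)) = t⁻¹ • 1 :=
    invOf_eq_right_inv (by
      simp [Matrix.smul_mul, Matrix.mul_smul, smul_smul, inv_mul_cancel₀ ht0,
        mul_inv_cancel₀ ht0])
  rw [Matrix.det_fromBlocks₂₂, hInvOf]
  obtain ⟨u, hu⟩ : ∃ u : ℝ, u = (t - 1)⁻¹ * t⁻¹ := ⟨_, rfl⟩
  have hmid : (t • 1 - 1 : Matrix (Fin p) (Fin p) ℝ) - Y * (t⁻¹ • (1 : Matrix (Fin q) (Fin q) ℝ)) * (-Z)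
      = (t - 1) • ((1 : Matrix (Fin p) (Fin p) ℝ) + u • (Y * Z)) := by
    rw [hsm, Matrix.mul_smul Y t⁻¹ 1, Matrix.mul_one, Matrix.smul_mul, Matrix.mul_neg,
      smul_neg, sub_neg_eq_add, smul_add, smul_smul, hu, ← mul_assoc, mul_inv_cancel₀ ht1',
      one_mul]
  have h2 : ((1 : Matrix (Fin p) (Fin p) ℝ) + u • (Y * Z)).det = (1 + u) ^ q := by
    rw [← Matrix.smul_mul, Matrix.det_one_add_mul_comm, Matrix.mul_smul, hZY,
      show (1 : Matrix (Fin q) (Fin q) ℝ) + u • 1 = (1 + u) • 1 by rw [add_smul, one_smul],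
      Matrix.det_smul, Matrix.det_one, mul_one, Fintype.card_fin]
  rw [hmid, hsm]
  simp only [Matrix.det_smul, Matrix.det_one, mul_one, Fintype.card_fin, h2]
  have hk : m + p - q + q = m + p := Nat.sub_add_cancel (hqp.trans (Nat.le_add_left p m))
  have e1 : (t - 1) * (t * (1 + u)) = t ^ 2 - t + 1 := by
    rw [hu]; field_simp
  have key : (t - 1) ^ m * (t ^ q * ((t - 1) ^ p * (1 + u) ^ q))
      = (t - 1) ^ (m + p - q) * (t ^ 2 - t + 1) ^ q :=
    calc (t - 1) ^ m * (t ^ q * ((t - 1) ^ p * (1 + u) ^ q))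
        = ((t - 1) ^ m * (t - 1) ^ p) * (t * (1 + u)) ^ q := by rw [mul_pow]; ring
      _ = ((t - 1) ^ (m + p - q) * (t - 1) ^ q) * (t * (1 + u)) ^ q := by
          rw [← pow_add, ← pow_add, hk]
      _ = (t - 1) ^ (m + p - q) * ((t - 1) * (t * (1 + u))) ^ q := by rw [mul_assoc, ← mul_pow]
      _ = (t - 1) ^ (m + p - q) * (t ^ 2 - t + 1) ^ q := by rw [e1]
  exact key

/-- the characteristic polynomial of `M̃₂⁻¹ K` is
`(λ − 1)^(m+p−q) (λ² − λ + 1)^q`. -/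
theorem stmt7 (m p q : ℕ)
    (A : Matrix (Fin m) (Fin m) ℝ) (As : Matrix (Fin p) (Fin p) ℝ)
    (G : Matrix (Fin p) (Fin m) ℝ) (B : Matrix (Fin q) (Fin p) ℝ)
    (S1 : Matrix (Fin p) (Fin p) ℝ) (S2 : Matrix (Fin q) (Fin q) ℝ)
    (hS1def : S1 = As + G * A⁻¹ * Gᵀ) (hS2def : S2 = B * S1⁻¹ * Bᵀ)
    (hA : IsUnit A) (hS1 : IsUnit S1) (hS2 : IsUnit S2)
    (K M2t : Matrix (Fin m ⊕ (Fin p ⊕ Fin q)) (Fin m ⊕ (Fin p ⊕ Fin q)) ℝ)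
    (hK : K = blk3 A Gᵀ 0 G (-As) Bᵀ 0 B 0)
    (hM2t : M2t = blk3 A 0 0 G (-S1) 0 0 0 S2) :
    (M2t⁻¹ * K).charpoly = (X - 1) ^ (m + p - q) * (X ^ 2 - X + 1) ^ q := by
  have hdA : IsUnit A.det := (Matrix.isUnit_iff_isUnit_det A).mp hA
  have hdS1 : IsUnit S1.det := (Matrix.isUnit_iff_isUnit_det S1).mp hS1
  have hdS2 : IsUnit S2.det := (Matrix.isUnit_iff_isUnit_det S2).mp hS2
  set Y : Matrix (Fin p) (Fin q) ℝ := S1⁻¹ * Bᵀ with hY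
  set Z : Matrix (Fin q) (Fin p) ℝ := S2⁻¹ * B with hZ
  have hZY : Z * Y = 1 := by
    rw [hZ, hY, Matrix.mul_assoc, ← Matrix.mul_assoc B, ← hS2def,
      Matrix.nonsing_inv_mul S2 hdS2]
  have hqp : q ≤ p := by
    have h := Matrix.rank_mul_le_left Z Y
    rw [hZY, Matrix.rank_one] at h
    calc q = Fintype.card (Fin q) := (Fintype.card_fin q).symm
      _ ≤ Z.rank := h
      _ ≤ Fintype.card (Fin p) := Z.rank_le_card_width
      _ = p := Fintype.card_fin p
  set T : Matrix (Fin m ⊕ (Fin p ⊕ Fin q)) (Fin m ⊕ (Fin p ⊕ Fin q)) ℝ :=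
    blk3 1 (A⁻¹ * Gᵀ) 0 0 1 (-Y) 0 Z 0 with hTdef
  have hdM2t : IsUnit M2t.det := by
    rw [hM2t, blk3, fromCols_zero, Matrix.det_fromBlocks_zero₁₂,
      Matrix.det_fromBlocks_zero₁₂, Matrix.det_neg]
    exact hdA.mul (((isUnit_one.neg.pow _).mul hdS1).mul hdS2)
  have e12 : A * (A⁻¹ * Gᵀ) = Gᵀ := by
    rw [← Matrix.mul_assoc, Matrix.mul_nonsing_inv A hdA, Matrix.one_mul]
  have e22 : G * (A⁻¹ * Gᵀ) + -S1 = -As := by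
    rw [hS1def, Matrix.mul_assoc]; abel
  have e23 : S1 * Y = Bᵀ := by
    rw [hY, ← Matrix.mul_assoc, Matrix.mul_nonsing_inv S1 hdS1, Matrix.one_mul]
  have e32 : S2 * Z = B := by
    rw [hZ, ← Matrix.mul_assoc, Matrix.mul_nonsing_inv S2 hdS2, Matrix.one_mul]
  have hMT : M2t * T = K := by
    rw [hM2t, hTdef, blk3_mul_s7, hK]
    simp [e12, e22, e23, e32]
  have hT : M2t⁻¹ * K = T := by
    rw [← hMT, ← Matrix.mul_assoc, Matrix.nonsing_inv_mul M2t hdM2t, Matrix.one_mul]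
  rw [hT]
  apply Polynomial.eq_of_infinite_eval_eq
  apply Set.Infinite.mono (s := ({0, 1} : Set ℝ)ᶜ)
  · intro t ht
    simp only [Set.mem_compl_iff, Set.mem_insert_iff, Set.mem_singleton_iff, not_or] at ht
    obtain ⟨ht0, ht1⟩ := ht
    simp only [Set.mem_setOf_eq]
    rw [eval_charpoly', hTdef, det_aux (A⁻¹ * Gᵀ) Y Z hZY hqp t ht0 ht1]
    simp [eval_pow, eval_mul]
  · exact Set.Finite.infinite_compl ((Set.finite_singleton 1).insert 0)
end

section
/- Let A be an invertible m×m real matrix, A_s a p×p real matrix, G a p×m real matrix, B a q×p real matrix, and suppose S₁ = A_s + G A⁻¹ Gᵀ and S₂ = B S₁⁻¹ Bᵀ are invertible. Define the block-diagonal preconditioner M₁ = blockdiag(A, S₁, S₂). Then for every nonzero x ∈ ℝ^m with G x = 0, the vector (x, 0, 0) is an eigenvector of M₁⁻¹K with eigenvalue 1; consequently the geometric multiplicity of the eigenvalue 1 of M₁⁻¹K is at least m − rank(G), the nullity of G. -/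
open Matrix

/-- Extension by zero as a linear map. -/
noncomputable def extL (m p q : ℕ) : (Fin m → ℝ) →ₗ[ℝ] (Fin m ⊕ (Fin p ⊕ Fin q) → ℝ) where
  toFun x := Sum.elim x 0
  map_add' x y := by ext (i | i) <;> simp
  map_smul' c x := by ext (i | i) <;> simp

lemma extL_inj (m p q : ℕ) : Function.Injective (extL m p q) := by
  intro x y h
  ext i
  exact congrFun h (Sum.inl i)

/-- for every nonzero `x` with `G x = 0`, the vector `(x, 0, 0)`
is an eigenvector of `M₁⁻¹K` with eigenvalue `1`; hence the geometric
multiplicity of the eigenvalue `1` is at least `m − rank G`. -/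
theorem stmt9 (m p q : ℕ)
    (A : Matrix (Fin m) (Fin m) ℝ) (As : Matrix (Fin p) (Fin p) ℝ)
    (G : Matrix (Fin p) (Fin m) ℝ) (B : Matrix (Fin q) (Fin p) ℝ)
    (S1 : Matrix (Fin p) (Fin p) ℝ) (S2 : Matrix (Fin q) (Fin q) ℝ)
    (hS1def : S1 = As + G * A⁻¹ * Gᵀ) (hS2def : S2 = B * S1⁻¹ * Bᵀ)
    (hA : IsUnit A) (hS1 : IsUnit S1) (hS2 : IsUnit S2)
    (K M1 : Matrix (Fin m ⊕ (Fin p ⊕ Fin q)) (Fin m ⊕ (Fin p ⊕ Fin q)) ℝ)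
    (hK : K = blk3 A Gᵀ 0 G (-As) Bᵀ 0 B 0)
    (hM1 : M1 = blk3 A 0 0 0 S1 0 0 0 S2) :
    (∀ x : Fin m → ℝ, x ≠ 0 → G *ᵥ x = 0 →
      (M1⁻¹ * K) *ᵥ Sum.elim x (0 : Fin p ⊕ Fin q → ℝ) =
        (1 : ℝ) • Sum.elim x (0 : Fin p ⊕ Fin q → ℝ) ∧
      Sum.elim x (0 : Fin p ⊕ Fin q → ℝ) ≠ 0) ∧
    m - G.rank ≤
      Module.finrank ℝ (LinearMap.ker (M1⁻¹ * K - (1 : ℝ) • 1).mulVecLin) := by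
  -- M1 is invertible
  have hdetM1 : IsUnit M1.det := by
    rw [hM1]
    unfold blk3
    have h1 : (Matrix.fromCols (0 : Matrix (Fin m) (Fin p) ℝ)
        (0 : Matrix (Fin m) (Fin q) ℝ)) = 0 := by
      ext i (j | j) <;> simp [Matrix.fromCols]
    have h2 : (Matrix.fromRows (0 : Matrix (Fin p) (Fin m) ℝ)
        (0 : Matrix (Fin q) (Fin m) ℝ)) = 0 := by
      ext (i | i) j <;> rfl
    rw [h1, h2, Matrix.det_fromBlocks_zero₂₁, Matrix.det_fromBlocks_zero₂₁]
    exact ((hA.map (Matrix.detMonoidHom)).mul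
      ((hS1.map (Matrix.detMonoidHom)).mul (hS2.map (Matrix.detMonoidHom))))
  have hinv : M1⁻¹ * M1 = 1 := Matrix.nonsing_inv_mul _ hdetM1
  -- key eigenvector computation, for all x with G x = 0
  have key : ∀ x : Fin m → ℝ, G *ᵥ x = 0 →
      (M1⁻¹ * K) *ᵥ Sum.elim x (0 : Fin p ⊕ Fin q → ℝ) =
        Sum.elim x (0 : Fin p ⊕ Fin q → ℝ) := by
    intro x hx
    have hzero : (0 : Fin p ⊕ Fin q → ℝ) = Sum.elim (0 : Fin p → ℝ) (0 : Fin q → ℝ) := by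
      ext (i | i) <;> rfl
    have hKv : K *ᵥ Sum.elim x (0 : Fin p ⊕ Fin q → ℝ) =
        M1 *ᵥ Sum.elim x (0 : Fin p ⊕ Fin q → ℝ) := by
      rw [hK, hM1]
      unfold blk3
      rw [hzero]
      simp [Matrix.fromBlocks_mulVec, Matrix.fromRows_mulVec, hx]
    rw [← Matrix.mulVec_mulVec, hKv, Matrix.mulVec_mulVec, hinv, Matrix.one_mulVec]
  constructor
  · intro x hx hGx
    refine ⟨by rw [key x hGx, one_smul], ?_⟩
    intro h
    exact hx (by ext i; exact congrFun h (Sum.inl i))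
  · -- geometric multiplicity bound
    have hmem : ∀ x : Fin m → ℝ, x ∈ LinearMap.ker G.mulVecLin →
        extL m p q x ∈ LinearMap.ker (M1⁻¹ * K - (1 : ℝ) • 1).mulVecLin := by
      intro x hx
      rw [LinearMap.mem_ker, Matrix.mulVecLin_apply] at hx ⊢
      have he : extL m p q x = Sum.elim x 0 := rfl
      rw [he, Matrix.sub_mulVec, key x hx, one_smul, Matrix.one_mulVec]
      show Sum.elim x 0 - Sum.elim x 0 = 0
      simp
    set T := (M1⁻¹ * K - (1 : ℝ) • 1).mulVecLin
    let f : LinearMap.ker G.mulVecLin →ₗ[ℝ] LinearMap.ker T :=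
      LinearMap.codRestrict _ ((extL m p q).comp (LinearMap.ker G.mulVecLin).subtype)
        (fun c => hmem c c.2)
    have hfinj : Function.Injective f := by
      intro a b h
      apply Subtype.ext
      apply extL_inj m p q
      exact congrArg Subtype.val h
    have hle : Module.finrank ℝ (LinearMap.ker G.mulVecLin) ≤
        Module.finrank ℝ (LinearMap.ker T) :=
      LinearMap.finrank_le_finrank_of_injective hfinj
    have hrn : Module.finrank ℝ (LinearMap.range G.mulVecLin) +
        Module.finrank ℝ (LinearMap.ker G.mulVecLin) = m := by
      have := LinearMap.finrank_range_add_finrank_ker G.mulVecLin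
      simpa using this
    have hrank : G.rank = Module.finrank ℝ (LinearMap.range G.mulVecLin) := rfl
    omega
end

section
/- Let A be an invertible m×m real matrix, A_s a p×p real matrix, G a p×m real matrix, B a q×p real matrix, and suppose S₁ = A_s + G A⁻¹ Gᵀ and S₂ = B S₁⁻¹ Bᵀ are invertible. Define M₁ = blockdiag(A, S₁, S₂). Then for every nonzero y ∈ ℝ^p with Gᵀ y = 0 and B y = 0, the vector (0, y, 0) is an eigenvector of M₁⁻¹K with eigenvalue −1; consequently the geometric multiplicity of the eigenvalue −1 of M₁⁻¹K is at least the dimension of ker(Gᵀ) ∩ ker(B). -/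
open Matrix

/-- The linear embedding `y ↦ (0, y, 0)`. -/
def embed23 (m p q : ℕ) : (Fin p → ℝ) →ₗ[ℝ] (Fin m ⊕ (Fin p ⊕ Fin q) → ℝ) where
  toFun y := Sum.elim (0 : Fin m → ℝ) (Sum.elim y (0 : Fin q → ℝ))
  map_add' x y := by funext i; rcases i with i | i | i <;> simp
  map_smul' c y := by funext i; rcases i with i | i | i <;> simp

/-- for every nonzero `y` with `Gᵀ y = 0` and `B y = 0`, the
vector `(0, y, 0)` is an eigenvector of `M₁⁻¹K` with eigenvalue `−1`; hence
the geometric multiplicity of the eigenvalue `−1` is at least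
`dim (ker Gᵀ ⊓ ker B)`. -/
theorem stmt10 (m p q : ℕ)
    (A : Matrix (Fin m) (Fin m) ℝ) (As : Matrix (Fin p) (Fin p) ℝ)
    (G : Matrix (Fin p) (Fin m) ℝ) (B : Matrix (Fin q) (Fin p) ℝ)
    (S1 : Matrix (Fin p) (Fin p) ℝ) (S2 : Matrix (Fin q) (Fin q) ℝ)
    (hS1def : S1 = As + G * A⁻¹ * Gᵀ) (hS2def : S2 = B * S1⁻¹ * Bᵀ)
    (hA : IsUnit A) (hS1 : IsUnit S1) (hS2 : IsUnit S2)
    (K M1 : Matrix (Fin m ⊕ (Fin p ⊕ Fin q)) (Fin m ⊕ (Fin p ⊕ Fin q)) ℝ)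
    (hK : K = blk3 A Gᵀ 0 G (-As) Bᵀ 0 B 0)
    (hM1 : M1 = blk3 A 0 0 0 S1 0 0 0 S2) :
    (∀ y : Fin p → ℝ, y ≠ 0 → Gᵀ *ᵥ y = 0 → B *ᵥ y = 0 →
      (M1⁻¹ * K) *ᵥ Sum.elim (0 : Fin m → ℝ) (Sum.elim y (0 : Fin q → ℝ)) =
        (-1 : ℝ) • Sum.elim (0 : Fin m → ℝ) (Sum.elim y (0 : Fin q → ℝ)) ∧
      Sum.elim (0 : Fin m → ℝ) (Sum.elim y (0 : Fin q → ℝ)) ≠ 0) ∧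
    Module.finrank ℝ ↥(LinearMap.ker Gᵀ.mulVecLin ⊓ LinearMap.ker B.mulVecLin) ≤
      Module.finrank ℝ (LinearMap.ker (M1⁻¹ * K - (-1 : ℝ) • 1).mulVecLin) := by
  -- M1 as a block-triangular matrix
  have hM1' : M1 = fromBlocks A 0 0 (fromBlocks S1 0 0 S2) := by
    rw [hM1]; unfold blk3
    ext (i | i | i) (j | j | j) <;>
      simp [fromBlocks, fromCols, fromRows_apply_inl, fromRows_apply_inr]
  have hM1det : IsUnit M1.det := by
    rw [hM1', Matrix.det_fromBlocks_zero₂₁, Matrix.det_fromBlocks_zero₂₁]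
    exact ((hA.map (Matrix.detMonoidHom)).mul
      ((hS1.map (Matrix.detMonoidHom)).mul (hS2.map (Matrix.detMonoidHom))))
  -- the key eigenvalue computation, valid for all y in the kernels
  have key : ∀ y : Fin p → ℝ, Gᵀ *ᵥ y = 0 → B *ᵥ y = 0 →
      (M1⁻¹ * K) *ᵥ Sum.elim (0 : Fin m → ℝ) (Sum.elim y (0 : Fin q → ℝ)) =
        (-1 : ℝ) • Sum.elim (0 : Fin m → ℝ) (Sum.elim y (0 : Fin q → ℝ)) := by
    intro y hGy hBy
    set v : Fin m ⊕ (Fin p ⊕ Fin q) → ℝ :=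
      Sum.elim (0 : Fin m → ℝ) (Sum.elim y (0 : Fin q → ℝ)) with hv
    have hS1y : S1 *ᵥ y = As *ᵥ y := by
      rw [hS1def, Matrix.add_mulVec, Matrix.mul_assoc, ← Matrix.mulVec_mulVec,
        ← Matrix.mulVec_mulVec, hGy]
      simp
    have hKv : K *ᵥ v = Sum.elim (0 : Fin m → ℝ)
        (Sum.elim (-(As *ᵥ y)) (0 : Fin q → ℝ)) := by
      rw [hK]; unfold blk3
      rw [hv, Matrix.fromBlocks_mulVec]
      have h1 : (Sum.elim (0 : Fin m → ℝ) (Sum.elim y (0 : Fin q → ℝ))) ∘ Sum.inl = (0 : Fin m → ℝ) := rfl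
      have h2 : (Sum.elim (0 : Fin m → ℝ) (Sum.elim y (0 : Fin q → ℝ))) ∘ Sum.inr = Sum.elim y (0 : Fin q → ℝ) := rfl
      rw [h1, h2, Matrix.fromCols_mulVec_sumElim, Matrix.fromBlocks_mulVec]
      have h3 : (Sum.elim y (0 : Fin q → ℝ)) ∘ Sum.inl = y := rfl
      have h4 : (Sum.elim y (0 : Fin q → ℝ)) ∘ Sum.inr = (0 : Fin q → ℝ) := rfl
      rw [h3, h4]
      simp [hGy, hBy, Matrix.neg_mulVec]
    have hM1v : M1 *ᵥ ((-1 : ℝ) • v) = Sum.elim (0 : Fin m → ℝ)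
        (Sum.elim (-(As *ᵥ y)) (0 : Fin q → ℝ)) := by
      rw [hM1', hv]
      have hsv : (-1 : ℝ) • (Sum.elim (0 : Fin m → ℝ) (Sum.elim y (0 : Fin q → ℝ)))
          = Sum.elim (0 : Fin m → ℝ) (Sum.elim (-y) (0 : Fin q → ℝ)) := by
        funext i; rcases i with i | i | i <;> simp
      rw [hsv, Matrix.fromBlocks_mulVec]
      have h1 : (Sum.elim (0 : Fin m → ℝ) (Sum.elim (-y) (0 : Fin q → ℝ))) ∘ Sum.inl = (0 : Fin m → ℝ) := rfl
      have h2 : (Sum.elim (0 : Fin m → ℝ) (Sum.elim (-y) (0 : Fin q → ℝ))) ∘ Sum.inr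
          = Sum.elim (-y) (0 : Fin q → ℝ) := rfl
      rw [h1, h2, Matrix.fromBlocks_mulVec]
      have h3 : (Sum.elim (-y) (0 : Fin q → ℝ)) ∘ Sum.inl = -y := rfl
      have h4 : (Sum.elim (-y) (0 : Fin q → ℝ)) ∘ Sum.inr = (0 : Fin q → ℝ) := rfl
      rw [h3, h4]
      simp [Matrix.mulVec_neg, hS1y]
    calc (M1⁻¹ * K) *ᵥ v = M1⁻¹ *ᵥ (K *ᵥ v) := by rw [← Matrix.mulVec_mulVec]
      _ = M1⁻¹ *ᵥ (M1 *ᵥ ((-1 : ℝ) • v)) := by rw [hKv, hM1v]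
      _ = (M1⁻¹ * M1) *ᵥ ((-1 : ℝ) • v) := by rw [Matrix.mulVec_mulVec]
      _ = (-1 : ℝ) • v := by rw [Matrix.nonsing_inv_mul M1 hM1det, Matrix.one_mulVec]
  constructor
  · intro y hy hGy hBy
    refine ⟨key y hGy hBy, fun h => hy ?_⟩
    funext i
    have := congrFun h (Sum.inr (Sum.inl i))
    simpa using this
  · -- the dimension inequality
    have hker : ∀ x : ↥(LinearMap.ker Gᵀ.mulVecLin ⊓ LinearMap.ker B.mulVecLin),
        embed23 m p q x.1 ∈ LinearMap.ker (M1⁻¹ * K - (-1 : ℝ) • 1).mulVecLin := by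
      rintro ⟨x, hx1, hx2⟩
      simp only [LinearMap.mem_ker, Matrix.mulVecLin_apply] at hx1 hx2 ⊢
      rw [Matrix.sub_mulVec]
      have := key x hx1 hx2
      simp only [embed23, LinearMap.coe_mk, AddHom.coe_mk]
      rw [this]
      rw [Matrix.smul_mulVec, Matrix.one_mulVec]
      simp
    let f : ↥(LinearMap.ker Gᵀ.mulVecLin ⊓ LinearMap.ker B.mulVecLin) →ₗ[ℝ]
        ↥(LinearMap.ker (M1⁻¹ * K - (-1 : ℝ) • 1).mulVecLin) :=
      LinearMap.codRestrict _ ((embed23 m p q).comp (Submodule.subtype _)) hker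
    have hinj : Function.Injective f := by
      intro a b hab
      ext i
      have := congrArg Subtype.val hab
      simp only [f, LinearMap.codRestrict_apply, LinearMap.comp_apply,
        Submodule.coe_subtype, embed23, LinearMap.coe_mk, AddHom.coe_mk] at this
      exact congrFun this (Sum.inr (Sum.inl i))
    exact LinearMap.finrank_le_finrank_of_injective hinj
end

section
/- Let A be an invertible m×m real matrix, A_s a p×p real matrix, G a p×m real matrix, B a q×p real matrix, and suppose S₁ = A_s + G A⁻¹ Gᵀ and S₂ = B S₁⁻¹ Bᵀ are invertible. Define M₁ = blockdiag(A, S₁, S₂). Let λ ∈ ℝ satisfy λ² + λ − 1 = 0 (i.e., λ = (−1 ± √5)/2). Then for every nonzero z ∈ ℝ^q with Gᵀ S₁⁻¹ Bᵀ z = 0, the vector (0, (1 + λ)⁻¹ S₁⁻¹ Bᵀ z, z) is an eigenvector of M₁⁻¹K with eigenvalue λ; consequently each of the two eigenvalues (−1 ± √5)/2 of M₁⁻¹K has geometric multiplicity at least dim ker(Gᵀ S₁⁻¹ Bᵀ). -/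
open Matrix

lemma blk3_mulVec {m p q : Type*} [Fintype m] [Fintype p] [Fintype q]
    (M11 : Matrix m m ℝ) (M12 : Matrix m p ℝ) (M13 : Matrix m q ℝ)
    (M21 : Matrix p m ℝ) (M22 : Matrix p p ℝ) (M23 : Matrix p q ℝ)
    (M31 : Matrix q m ℝ) (M32 : Matrix q p ℝ) (M33 : Matrix q q ℝ)
    (x : m → ℝ) (y : p → ℝ) (z : q → ℝ) :
    (Matrix.fromBlocks M11 (Matrix.fromCols M12 M13)
      (Matrix.fromRows M21 M31) (Matrix.fromBlocks M22 M23 M32 M33)) *ᵥ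
        Sum.elim x (Sum.elim y z) =
      Sum.elim (M11 *ᵥ x + (M12 *ᵥ y + M13 *ᵥ z))
        (Sum.elim (M21 *ᵥ x + (M22 *ᵥ y + M23 *ᵥ z))
          (M31 *ᵥ x + (M32 *ᵥ y + M33 *ᵥ z))) := by
  funext i
  rcases i with i | (i | i) <;>
    simp [Matrix.fromBlocks_mulVec, Matrix.fromRows_mulVec,
      Matrix.fromCols_mulVec_sumElim]

theorem stmt11' (m p q : ℕ)
    (A : Matrix (Fin m) (Fin m) ℝ) (As : Matrix (Fin p) (Fin p) ℝ)
    (G : Matrix (Fin p) (Fin m) ℝ) (B : Matrix (Fin q) (Fin p) ℝ)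
    (S1 : Matrix (Fin p) (Fin p) ℝ) (S2 : Matrix (Fin q) (Fin q) ℝ)
    (hS1def : S1 = As + G * A⁻¹ * Gᵀ) (hS2def : S2 = B * S1⁻¹ * Bᵀ)
    (hA : IsUnit A) (hS1 : IsUnit S1) (hS2 : IsUnit S2)
    (K M1 : Matrix (Fin m ⊕ (Fin p ⊕ Fin q)) (Fin m ⊕ (Fin p ⊕ Fin q)) ℝ)
    (hK : K = Matrix.fromBlocks A (Matrix.fromCols Gᵀ 0)
      (Matrix.fromRows G 0) (Matrix.fromBlocks (-As) Bᵀ B 0))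
    (hM1 : M1 = Matrix.fromBlocks A (Matrix.fromCols 0 0)
      (Matrix.fromRows 0 0) (Matrix.fromBlocks S1 0 0 S2))
    (lam : ℝ) (hlam : lam ^ 2 + lam - 1 = 0) :
    (∀ z : Fin q → ℝ, z ≠ 0 → (Gᵀ * S1⁻¹ * Bᵀ) *ᵥ z = 0 →
      ∀ y : Fin p → ℝ, y = (1 + lam)⁻¹ • ((S1⁻¹ * Bᵀ) *ᵥ z) →
        (M1⁻¹ * K) *ᵥ Sum.elim (0 : Fin m → ℝ) (Sum.elim y z) =
          lam • Sum.elim (0 : Fin m → ℝ) (Sum.elim y z) ∧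
        Sum.elim (0 : Fin m → ℝ) (Sum.elim y z) ≠ 0) ∧
    Module.finrank ℝ (LinearMap.ker (Gᵀ * S1⁻¹ * Bᵀ).mulVecLin) ≤
      Module.finrank ℝ (LinearMap.ker (M1⁻¹ * K - lam • 1).mulVecLin) := by
  -- scalar facts
  have hlam1 : (1 : ℝ) + lam ≠ 0 := by
    intro h
    have : lam = -1 := by linarith
    rw [this] at hlam; norm_num at hlam
  have hlammul : lam * (1 + lam) = 1 := by linear_combination hlam
  have hlaminv : (1 + lam)⁻¹ = lam := by
    field_simp
    linarith [hlammul]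
  -- invertibility facts
  have hAdet : IsUnit A.det := (Matrix.isUnit_iff_isUnit_det A).mp hA
  have hS1det : IsUnit S1.det := (Matrix.isUnit_iff_isUnit_det S1).mp hS1
  have hS2det : IsUnit S2.det := (Matrix.isUnit_iff_isUnit_det S2).mp hS2
  have hS1inv : S1 * S1⁻¹ = 1 := Matrix.mul_nonsing_inv S1 hS1det
  have hM1det : IsUnit M1.det := by
    rw [hM1]
    have h0 : (Matrix.fromCols (0 : Matrix (Fin m) (Fin p) ℝ)
        (0 : Matrix (Fin m) (Fin q) ℝ)) = 0 := by
      funext i j; rcases j with j | j <;> simp [Matrix.fromCols]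
    have h0' : (Matrix.fromRows (0 : Matrix (Fin p) (Fin m) ℝ)
        (0 : Matrix (Fin q) (Fin m) ℝ)) = 0 := by
      funext i j; rcases i with i | i <;> simp [Matrix.fromRows_apply_inl, Matrix.fromRows_apply_inr]
    rw [h0, h0', Matrix.det_fromBlocks_zero₂₁, Matrix.det_fromBlocks_zero₂₁]
    exact (hAdet.mul (hS1det.mul hS2det))
  have hM1invM1 : M1⁻¹ * M1 = 1 := Matrix.nonsing_inv_mul M1 hM1det
  -- the key eigen computation, for all z in the kernel
  have key : ∀ z : Fin q → ℝ, (Gᵀ * S1⁻¹ * Bᵀ) *ᵥ z = 0 →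
      (M1⁻¹ * K) *ᵥ Sum.elim (0 : Fin m → ℝ)
          (Sum.elim ((1 + lam)⁻¹ • ((S1⁻¹ * Bᵀ) *ᵥ z)) z) =
        lam • Sum.elim (0 : Fin m → ℝ)
          (Sum.elim ((1 + lam)⁻¹ • ((S1⁻¹ * Bᵀ) *ᵥ z)) z) := by
    intro z hz
    set y : Fin p → ℝ := (1 + lam)⁻¹ • ((S1⁻¹ * Bᵀ) *ᵥ z) with hy
    set v : (Fin m ⊕ (Fin p ⊕ Fin q)) → ℝ := Sum.elim 0 (Sum.elim y z) with hv
    have hGy : Gᵀ *ᵥ y = 0 := by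
      rw [hy, Matrix.mulVec_smul, Matrix.mulVec_mulVec, ← Matrix.mul_assoc, hz,
        smul_zero]
    have hS1y : S1 *ᵥ y = (1 + lam)⁻¹ • (Bᵀ *ᵥ z) := by
      rw [hy, Matrix.mulVec_smul, Matrix.mulVec_mulVec, ← Matrix.mul_assoc,
        hS1inv, Matrix.one_mul]
    have hAsy : As *ᵥ y = S1 *ᵥ y := by
      have h1 : As = S1 - G * A⁻¹ * Gᵀ := by rw [hS1def]; abel
      have h2 : (G * A⁻¹ * Gᵀ) *ᵥ y = 0 := by
        rw [Matrix.mul_assoc, ← Matrix.mulVec_mulVec, ← Matrix.mulVec_mulVec,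
          hGy, Matrix.mulVec_zero, Matrix.mulVec_zero]
      rw [h1, Matrix.sub_mulVec, h2, sub_zero]
    have hBy : B *ᵥ y = (1 + lam)⁻¹ • (S2 *ᵥ z) := by
      rw [hy, Matrix.mulVec_smul, Matrix.mulVec_mulVec, ← Matrix.mul_assoc,
        ← hS2def]
    have hKv : K *ᵥ v = lam • (M1 *ᵥ v) := by
      rw [hK, hM1, hv, blk3_mulVec, blk3_mulVec]
      funext i
      rcases i with i | (i | i)
      · simp [hGy]
      · have h2 : (-As) *ᵥ y + Bᵀ *ᵥ z = lam • (S1 *ᵥ y) := by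
          rw [Matrix.neg_mulVec, hAsy, hS1y]
          funext j
          simp only [Pi.add_apply, Pi.neg_apply, Pi.smul_apply, smul_eq_mul]
          rw [hlaminv]
          linear_combination (-(Bᵀ *ᵥ z) j) * hlam
        have := congrFun h2 i
        simpa using this
      · have h3 : B *ᵥ y = lam • (S2 *ᵥ z) := by rw [hBy, hlaminv]
        have := congrFun h3 i
        simpa using this
    calc (M1⁻¹ * K) *ᵥ v = M1⁻¹ *ᵥ (K *ᵥ v) := by
            rw [Matrix.mulVec_mulVec]
      _ = M1⁻¹ *ᵥ (lam • (M1 *ᵥ v)) := by rw [hKv]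
      _ = lam • (M1⁻¹ *ᵥ (M1 *ᵥ v)) := by rw [Matrix.mulVec_smul]
      _ = lam • v := by rw [Matrix.mulVec_mulVec, hM1invM1, Matrix.one_mulVec]
  constructor
  · intro z hz0 hz y hy
    subst hy
    refine ⟨key z hz, ?_⟩
    intro hcon
    apply hz0
    funext i
    have := congrFun hcon (Sum.inr (Sum.inr i))
    simpa using this
  · -- finrank inequality
    set T := (M1⁻¹ * K - lam • 1)
    -- the linear map from ker to ker
    have hmem : ∀ w : LinearMap.ker (Gᵀ * S1⁻¹ * Bᵀ).mulVecLin,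
        (Sum.elim (0 : Fin m → ℝ)
          (Sum.elim ((1 + lam)⁻¹ • ((S1⁻¹ * Bᵀ) *ᵥ (w : Fin q → ℝ)))
            (w : Fin q → ℝ))) ∈ LinearMap.ker T.mulVecLin := by
      intro w
      have hw : (Gᵀ * S1⁻¹ * Bᵀ) *ᵥ (w : Fin q → ℝ) = 0 := w.2
      have := key (w : Fin q → ℝ) hw
      simp only [LinearMap.mem_ker, Matrix.mulVecLin_apply, T,
        Matrix.sub_mulVec, this, Matrix.smul_mulVec, Matrix.one_mulVec,
        sub_self]
    let f : LinearMap.ker (Gᵀ * S1⁻¹ * Bᵀ).mulVecLin →ₗ[ℝ]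
        LinearMap.ker T.mulVecLin :=
      { toFun := fun w => ⟨Sum.elim 0
          (Sum.elim ((1 + lam)⁻¹ • ((S1⁻¹ * Bᵀ) *ᵥ (w : Fin q → ℝ)))
            (w : Fin q → ℝ)), hmem w⟩
        map_add' := by
          intro w1 w2
          ext i
          rcases i with i | (i | i) <;>
            simp [Matrix.mulVec_add, smul_add, mul_add]
        map_smul' := by
          intro c w
          ext i
          rcases i with i | (i | i) <;>
            simp [Matrix.mulVec_smul, smul_smul, mul_comm] <;> ring }
    have hinj : Function.Injective f := by
      intro w1 w2 h
      ext i
      have := congrFun (congrArg Subtype.val h) (Sum.inr (Sum.inr i))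
      simpa [f] using this
    exact LinearMap.finrank_le_finrank_of_injective hinj


/-- for `λ` with `λ² + λ − 1 = 0` and any nonzero `z` with
`Gᵀ S₁⁻¹ Bᵀ z = 0`, the vector `(0, (1+λ)⁻¹ S₁⁻¹ Bᵀ z, z)` is an eigenvector
of `M₁⁻¹K` with eigenvalue `λ`; hence the geometric multiplicity of each of
the eigenvalues `(−1 ± √5)/2` is at least `dim ker (Gᵀ S₁⁻¹ Bᵀ)`. -/
theorem stmt11 (m p q : ℕ)
    (A : Matrix (Fin m) (Fin m) ℝ) (As : Matrix (Fin p) (Fin p) ℝ)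
    (G : Matrix (Fin p) (Fin m) ℝ) (B : Matrix (Fin q) (Fin p) ℝ)
    (S1 : Matrix (Fin p) (Fin p) ℝ) (S2 : Matrix (Fin q) (Fin q) ℝ)
    (hS1def : S1 = As + G * A⁻¹ * Gᵀ) (hS2def : S2 = B * S1⁻¹ * Bᵀ)
    (hA : IsUnit A) (hS1 : IsUnit S1) (hS2 : IsUnit S2)
    (K M1 : Matrix (Fin m ⊕ (Fin p ⊕ Fin q)) (Fin m ⊕ (Fin p ⊕ Fin q)) ℝ)
    (hK : K = blk3 A Gᵀ 0 G (-As) Bᵀ 0 B 0)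
    (hM1 : M1 = blk3 A 0 0 0 S1 0 0 0 S2)
    (lam : ℝ) (hlam : lam ^ 2 + lam - 1 = 0) :
    (∀ z : Fin q → ℝ, z ≠ 0 → (Gᵀ * S1⁻¹ * Bᵀ) *ᵥ z = 0 →
      ∀ y : Fin p → ℝ, y = (1 + lam)⁻¹ • ((S1⁻¹ * Bᵀ) *ᵥ z) →
        (M1⁻¹ * K) *ᵥ Sum.elim (0 : Fin m → ℝ) (Sum.elim y z) =
          lam • Sum.elim (0 : Fin m → ℝ) (Sum.elim y z) ∧
        Sum.elim (0 : Fin m → ℝ) (Sum.elim y z) ≠ 0) ∧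
    Module.finrank ℝ (LinearMap.ker (Gᵀ * S1⁻¹ * Bᵀ).mulVecLin) ≤
      Module.finrank ℝ (LinearMap.ker (M1⁻¹ * K - lam • 1).mulVecLin) :=
  stmt11' m p q A As G B S1 S2 hS1def hS2def hA hS1 hS2 K M1
    (by rw [hK]; rfl) (by rw [hM1]; rfl) lam hlam
end

section
/- Let A be an invertible m×m real matrix, A_s a p×p real matrix, G a p×m real matrix, B a q×p real matrix, and suppose S₁ = A_s + G A⁻¹ Gᵀ and S₂ = B S₁⁻¹ Bᵀ are invertible. Define M₁ = blockdiag(A, S₁, S₂). Let λ ∈ ℝ be an eigenvalue of M₁⁻¹K with λ ∉ {1, −1, (−1+√5)/2, (−1−√5)/2}. Then every eigenvector (x, y, z) of M₁⁻¹K with eigenvalue λ satisfies Gᵀ y ≠ 0, and the geometric multiplicity of λ is at most rank(G). In particular, every real eigenvalue λ > 1 of M₁⁻¹K, and every real eigenvalue λ ∈ (0,1) with λ ≠ (−1+√5)/2, has geometric multiplicity at most rank(G). -/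
open Matrix

lemma quad_roots_aux (lam : ℝ) (h : 1 - (lam + 1) * lam = 0) :
    lam = (-1 + Real.sqrt 5) / 2 ∨ lam = (-1 - Real.sqrt 5) / 2 := by
  have h5 : Real.sqrt 5 ^ 2 = 5 := Real.sq_sqrt (by norm_num)
  have hfac : (2*lam + 1 - Real.sqrt 5) * (2*lam + 1 + Real.sqrt 5) = 0 := by nlinarith [h5]
  rcases mul_eq_zero.mp hfac with h' | h'
  · left; linarith
  · right; linarith

lemma key_zero_aux (m p q : ℕ)
    (A : Matrix (Fin m) (Fin m) ℝ) (As : Matrix (Fin p) (Fin p) ℝ)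
    (G : Matrix (Fin p) (Fin m) ℝ) (B : Matrix (Fin q) (Fin p) ℝ)
    (S1 : Matrix (Fin p) (Fin p) ℝ) (S2 : Matrix (Fin q) (Fin q) ℝ)
    (hS1def : S1 = As + G * A⁻¹ * Gᵀ) (hS2def : S2 = B * S1⁻¹ * Bᵀ)
    (hA : IsUnit A) (hS1 : IsUnit S1) (hS2 : IsUnit S2)
    (K M1 : Matrix (Fin m ⊕ (Fin p ⊕ Fin q)) (Fin m ⊕ (Fin p ⊕ Fin q)) ℝ)
    (hK : K = blk3 A Gᵀ 0 G (-As) Bᵀ 0 B 0)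
    (hM1 : M1 = blk3 A 0 0 0 S1 0 0 0 S2)
    (lam : ℝ) (h1 : lam ≠ 1) (h2 : lam + 1 ≠ 0) (h5 : 1 - (lam + 1) * lam ≠ 0)
    (v : Fin m ⊕ (Fin p ⊕ Fin q) → ℝ)
    (heig : (M1⁻¹ * K) *ᵥ v = lam • v)
    (hGy : Gᵀ *ᵥ (fun i => v (Sum.inr (Sum.inl i))) = 0) : v = 0 := by
  have hAdet : IsUnit A.det := (Matrix.isUnit_iff_isUnit_det A).mp hA
  have hS1det : IsUnit S1.det := (Matrix.isUnit_iff_isUnit_det S1).mp hS1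
  have hS2det : IsUnit S2.det := (Matrix.isUnit_iff_isUnit_det S2).mp hS2
  set x : Fin m → ℝ := fun i => v (Sum.inl i) with hx
  set y : Fin p → ℝ := fun i => v (Sum.inr (Sum.inl i)) with hy
  set z : Fin q → ℝ := fun i => v (Sum.inr (Sum.inr i)) with hz
  have hv : v = Sum.elim x (Sum.elim y z) := by
    funext i; rcases i with i | i | i <;> rfl
  have hM1det : IsUnit M1.det := by
    rw [hM1]; unfold blk3
    rw [Matrix.fromCols_zero, Matrix.fromRows_zero, Matrix.det_fromBlocks_zero₂₁,
      Matrix.det_fromBlocks_zero₂₁]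
    exact (hAdet.mul (hS1det.mul hS2det))
  have hM1mul : M1 * M1⁻¹ = 1 := Matrix.mul_nonsing_inv _ hM1det
  have hKv : K *ᵥ v = lam • (M1 *ᵥ v) := by
    have h := congrArg (fun w => M1 *ᵥ w) heig
    simpa [Matrix.mulVec_mulVec, ← Matrix.mul_assoc, hM1mul, Matrix.one_mul,
      Matrix.mulVec_smul] using h
  rw [hK, hM1, hv] at hKv
  unfold blk3 at hKv
  rw [Matrix.fromCols_zero, Matrix.fromRows_zero] at hKv
  simp only [Matrix.fromBlocks_mulVec, Matrix.fromCols_mulVec_sumElim,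
    Matrix.fromRows_mulVec, Matrix.zero_mulVec, Matrix.mulVec_zero, add_zero, zero_add,
    Matrix.smul_mulVec] at hKv
  have e1 : A *ᵥ x + Gᵀ *ᵥ y = lam • (A *ᵥ x) := by
    funext i
    have := congrFun hKv (Sum.inl i)
    simpa using this
  have e2 : G *ᵥ x + ((-As) *ᵥ y + Bᵀ *ᵥ z) = lam • (S1 *ᵥ y) := by
    funext i
    have := congrFun hKv (Sum.inr (Sum.inl i))
    simpa using this
  have e3 : B *ᵥ y = lam • (S2 *ᵥ z) := by
    funext i
    have := congrFun hKv (Sum.inr (Sum.inr i))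
    simpa using this
  have hGy' : Gᵀ *ᵥ y = 0 := hGy
  have hAx : A *ᵥ x = 0 := by
    have h' : (lam - 1) • (A *ᵥ x) = 0 := by
      rw [sub_smul, one_smul, ← e1, hGy']; abel
    have hne : lam - 1 ≠ 0 := sub_ne_zero.mpr h1
    have := smul_eq_zero.mp h'
    tauto
  have hx0 : x = 0 := by
    have : A⁻¹ *ᵥ (A *ᵥ x) = x := by
      rw [Matrix.mulVec_mulVec, Matrix.nonsing_inv_mul _ hAdet, Matrix.one_mulVec]
    rw [← this, hAx, Matrix.mulVec_zero]
  have hS1y : S1 *ᵥ y = As *ᵥ y := by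
    rw [hS1def, Matrix.add_mulVec]
    have : (G * A⁻¹ * Gᵀ) *ᵥ y = 0 := by
      rw [← Matrix.mulVec_mulVec, hGy', Matrix.mulVec_zero]
    rw [this, add_zero]
  have hBz : Bᵀ *ᵥ z = (lam + 1) • (S1 *ᵥ y) := by
    have : (-As) *ᵥ y + Bᵀ *ᵥ z = lam • (S1 *ᵥ y) := by
      rw [hx0, Matrix.mulVec_zero] at e2; simpa using e2
    have hneg : (-As) *ᵥ y = -(S1 *ᵥ y) := by
      rw [Matrix.neg_mulVec, hS1y]
    rw [hneg] at this
    have := congrArg (fun w => S1 *ᵥ y + w) this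
    simp only [← add_assoc, add_neg_cancel, zero_add] at this
    rw [this, add_smul, one_smul, add_comm]
  have hS2z : S2 *ᵥ z = ((lam + 1) * lam) • (S2 *ᵥ z) := by
    have h' : S2 *ᵥ z = (B * S1⁻¹ * Bᵀ) *ᵥ z := by rw [hS2def]
    rw [← Matrix.mulVec_mulVec, ← Matrix.mulVec_mulVec, hBz, Matrix.mulVec_smul,
      Matrix.mulVec_mulVec, Matrix.nonsing_inv_mul _ hS1det, Matrix.one_mulVec,
      Matrix.mulVec_smul, e3, smul_smul] at h'
    exact h'
  have hz0 : z = 0 := by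
    have h' : (1 - (lam + 1) * lam) • (S2 *ᵥ z) = 0 := by
      rw [sub_smul, one_smul, ← hS2z]; abel
    have hS2z0 : S2 *ᵥ z = 0 := by
      rcases smul_eq_zero.mp h' with h'' | h''
      · exact absurd h'' h5
      · exact h''
    have : S2⁻¹ *ᵥ (S2 *ᵥ z) = z := by
      rw [Matrix.mulVec_mulVec, Matrix.nonsing_inv_mul _ hS2det, Matrix.one_mulVec]
    rw [← this, hS2z0, Matrix.mulVec_zero]
  have hy0 : y = 0 := by
    have h' : (lam + 1) • (S1 *ᵥ y) = 0 := by
      rw [← hBz, hz0, Matrix.mulVec_zero]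
    have hS1y0 : S1 *ᵥ y = 0 := by
      rcases smul_eq_zero.mp h' with h'' | h''
      · exact absurd h'' h2
      · exact h''
    have : S1⁻¹ *ᵥ (S1 *ᵥ y) = y := by
      rw [Matrix.mulVec_mulVec, Matrix.nonsing_inv_mul _ hS1det, Matrix.one_mulVec]
    rw [← this, hS1y0, Matrix.mulVec_zero]
  rw [hv, hx0, hy0, hz0]
  funext i; rcases i with i | i | i <;> rfl

lemma mult_le_aux (m p q : ℕ) (G : Matrix (Fin p) (Fin m) ℝ)
    (M : Matrix (Fin m ⊕ (Fin p ⊕ Fin q)) (Fin m ⊕ (Fin p ⊕ Fin q)) ℝ) (lam : ℝ)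
    (key : ∀ v, M *ᵥ v = lam • v → Gᵀ *ᵥ (fun i => v (Sum.inr (Sum.inl i))) = 0 → v = 0) :
    Module.finrank ℝ (LinearMap.ker (M - lam • 1).mulVecLin) ≤ G.rank := by
  set W := LinearMap.ker (M - lam • 1).mulVecLin with hW
  have hmem : ∀ v, v ∈ W ↔ M *ᵥ v = lam • v := by
    intro v
    rw [hW, LinearMap.mem_ker, Matrix.mulVecLin_apply, Matrix.sub_mulVec,
      Matrix.smul_mulVec, Matrix.one_mulVec, sub_eq_zero]
  let φ : W →ₗ[ℝ] LinearMap.range (Gᵀ.mulVecLin) :=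
    LinearMap.codRestrict _
      ((Gᵀ.mulVecLin.comp (LinearMap.funLeft ℝ ℝ (Sum.inr ∘ Sum.inl))).comp W.subtype)
      (fun w => ⟨_, rfl⟩)
  have hinj : Function.Injective φ := by
    rw [injective_iff_map_eq_zero]
    intro w hw
    have hw' : Gᵀ *ᵥ (fun i => (w : Fin m ⊕ (Fin p ⊕ Fin q) → ℝ) (Sum.inr (Sum.inl i))) = 0 :=
      congrArg Subtype.val hw
    have := key w ((hmem w).mp w.2) hw'
    exact Subtype.ext this
  calc Module.finrank ℝ W ≤ Module.finrank ℝ (LinearMap.range Gᵀ.mulVecLin) :=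
        LinearMap.finrank_le_finrank_of_injective hinj
    _ = Gᵀ.rank := rfl
    _ = G.rank := Matrix.rank_transpose G

/-- if `λ` is a real eigenvalue of `M₁⁻¹K` different from `1`,
`−1`, `(−1+√5)/2` and `(−1−√5)/2`, then every eigenvector `(x, y, z)` for `λ`
satisfies `Gᵀ y ≠ 0`, and the geometric multiplicity of `λ` is at most
`rank G`. In particular every real eigenvalue `λ > 1`, and every real
eigenvalue `λ ∈ (0,1)` with `λ ≠ (−1+√5)/2`, has geometric multiplicity at
most `rank G`. -/
theorem stmt12 (m p q : ℕ)
    (A : Matrix (Fin m) (Fin m) ℝ) (As : Matrix (Fin p) (Fin p) ℝ)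
    (G : Matrix (Fin p) (Fin m) ℝ) (B : Matrix (Fin q) (Fin p) ℝ)
    (S1 : Matrix (Fin p) (Fin p) ℝ) (S2 : Matrix (Fin q) (Fin q) ℝ)
    (hS1def : S1 = As + G * A⁻¹ * Gᵀ) (hS2def : S2 = B * S1⁻¹ * Bᵀ)
    (hA : IsUnit A) (hS1 : IsUnit S1) (hS2 : IsUnit S2)
    (K M1 : Matrix (Fin m ⊕ (Fin p ⊕ Fin q)) (Fin m ⊕ (Fin p ⊕ Fin q)) ℝ)
    (hK : K = blk3 A Gᵀ 0 G (-As) Bᵀ 0 B 0)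
    (hM1 : M1 = blk3 A 0 0 0 S1 0 0 0 S2)
    (lam : ℝ)
    (hev : ∃ v : Fin m ⊕ (Fin p ⊕ Fin q) → ℝ, v ≠ 0 ∧ (M1⁻¹ * K) *ᵥ v = lam • v)
    (h1 : lam ≠ 1) (h2 : lam ≠ -1)
    (h3 : lam ≠ (-1 + Real.sqrt 5) / 2) (h4 : lam ≠ (-1 - Real.sqrt 5) / 2) :
    (∀ v : Fin m ⊕ (Fin p ⊕ Fin q) → ℝ, v ≠ 0 → (M1⁻¹ * K) *ᵥ v = lam • v →
      Gᵀ *ᵥ (fun i => v (Sum.inr (Sum.inl i))) ≠ 0) ∧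
    Module.finrank ℝ (LinearMap.ker (M1⁻¹ * K - lam • 1).mulVecLin) ≤ G.rank ∧
    (∀ mu : ℝ, 1 < mu →
      Module.finrank ℝ (LinearMap.ker (M1⁻¹ * K - mu • 1).mulVecLin) ≤ G.rank) ∧
    (∀ mu : ℝ, 0 < mu → mu < 1 → mu ≠ (-1 + Real.sqrt 5) / 2 →
      Module.finrank ℝ (LinearMap.ker (M1⁻¹ * K - mu • 1).mulVecLin) ≤ G.rank) := by
  have h2' : lam + 1 ≠ 0 := fun h => h2 (by linarith)
  have h5 : 1 - (lam + 1) * lam ≠ 0 := by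
    intro h
    rcases quad_roots_aux lam h with h' | h'
    · exact h3 h'
    · exact h4 h'
  have key := key_zero_aux m p q A As G B S1 S2 hS1def hS2def hA hS1 hS2 K M1 hK hM1
  refine ⟨?_, ?_, ?_, ?_⟩
  · intro v hv0 hevv hGy
    exact hv0 (key lam h1 h2' h5 v hevv hGy)
  · exact mult_le_aux m p q G _ lam (key lam h1 h2' h5)
  · intro mu hmu
    have hmu1 : mu ≠ 1 := ne_of_gt hmu
    have hmu2 : mu + 1 ≠ 0 := by linarith
    have hmu5 : 1 - (mu + 1) * mu ≠ 0 := by nlinarith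
    exact mult_le_aux m p q G _ mu (key mu hmu1 hmu2 hmu5)
  · intro mu hmu0 hmu1 hmu3
    have hmu1' : mu ≠ 1 := ne_of_lt hmu1
    have hmu2 : mu + 1 ≠ 0 := by linarith
    have hmu5 : 1 - (mu + 1) * mu ≠ 0 := by
      intro h
      rcases quad_roots_aux mu h with h' | h'
      · exact hmu3 h'
      · have hs : Real.sqrt 5 ≥ 0 := Real.sqrt_nonneg 5
        rw [h'] at hmu0; linarith
    exact mult_le_aux m p q G _ mu (key mu hmu1' hmu2 hmu5)
end

section
/- Let C be a symmetric positive definite k×k real matrix, D a symmetric l×l real matrix, and M an l×k real matrix such that D − 2·M C⁻¹ Mᵀ is positive definite. Then every (complex) eigenvalue of the block matrix E = [[C, 2Mᵀ], [M, D]] is real and positive. -/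
open Matrix
open scoped ComplexOrder


lemma aux_eig {n : Type*} [Fintype n] [DecidableEq n] (F : Matrix n n ℝ) (hF : F.PosDef)
    (μ : ℂ) (w : n → ℂ) (hw : w ≠ 0)
    (heig : (F.map Complex.ofReal) *ᵥ w = μ • w) :
    ∃ r : ℝ, 0 < r ∧ μ = (r : ℂ) := by
  classical
  set a : n → ℝ := fun i => (w i).re with ha
  set b : n → ℝ := fun i => (w i).im with hb
  have hcomp : ∀ i, (∑ j, F i j * (w j).re = μ.re * (w i).re - μ.im * (w i).im) ∧
      (∑ j, F i j * (w j).im = μ.re * (w i).im + μ.im * (w i).re) := by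
    intro i
    have h := congrFun heig i
    simp only [Matrix.mulVec, dotProduct, Matrix.map_apply, Pi.smul_apply,
      smul_eq_mul] at h
    constructor
    · have h2 := congrArg Complex.re h
      simpa [Complex.re_sum, Complex.mul_re] using h2
    · have h2 := congrArg Complex.im h
      simpa [Complex.im_sum, Complex.mul_im] using h2
  have hFa : F *ᵥ a = μ.re • a - μ.im • b := by
    funext i
    simpa [Matrix.mulVec, dotProduct, a, b] using (hcomp i).1
  have hFb : F *ᵥ b = μ.re • b + μ.im • a := by
    funext i
    simpa [Matrix.mulVec, dotProduct, a, b] using (hcomp i).2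
  have hFsym : Fᵀ = F := by
    have := hF.1
    rwa [Matrix.IsHermitian, Matrix.conjTranspose_eq_transpose_of_trivial] at this
  have hsym : ∀ u t : n → ℝ, u ⬝ᵥ F *ᵥ t = t ⬝ᵥ F *ᵥ u := by
    intro u t
    rw [Matrix.dotProduct_mulVec, ← Matrix.mulVec_transpose, hFsym]
    exact dotProduct_comm _ _
  have hannn : (0:ℝ) ≤ a ⬝ᵥ a := Finset.sum_nonneg fun i _ => mul_self_nonneg _
  have hbnnn : (0:ℝ) ≤ b ⬝ᵥ b := Finset.sum_nonneg fun i _ => mul_self_nonneg _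
  have habpos : 0 < a ⬝ᵥ a + b ⬝ᵥ b := by
    rcases lt_or_eq_of_le (add_nonneg hannn hbnnn) with h | h
    · exact h
    · exfalso
      have ha0 : a ⬝ᵥ a = 0 := by linarith [hannn, hbnnn,
        (by linarith : a ⬝ᵥ a + b ⬝ᵥ b = 0)]
      have hb0 : b ⬝ᵥ b = 0 := by linarith
      have ha' : a = 0 := dotProduct_self_eq_zero.mp ha0
      have hb' : b = 0 := dotProduct_self_eq_zero.mp hb0
      apply hw
      funext i
      have h1 : (w i).re = 0 := congrFun ha' i
      have h2 : (w i).im = 0 := congrFun hb' i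
      exact Complex.ext (by simpa using h1) (by simpa using h2)
  have him : μ.im = 0 := by
    have e1 := hsym a b
    rw [hFa, hFb] at e1
    have hab : a ⬝ᵥ b = b ⬝ᵥ a := dotProduct_comm _ _
    simp only [dotProduct_add, dotProduct_sub, dotProduct_smul,
      smul_eq_mul] at e1
    have : μ.im * (a ⬝ᵥ a + b ⬝ᵥ b) = 0 := by linear_combination e1 - μ.re * hab
    rcases mul_eq_zero.mp this with h | h
    · exact h
    · exact absurd h habpos.ne'
  have hFa' : F *ᵥ a = μ.re • a := by rw [hFa, him]; simp
  have hFb' : F *ᵥ b = μ.re • b := by rw [hFb, him]; simp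
  have hq : a ⬝ᵥ (F *ᵥ a) + b ⬝ᵥ (F *ᵥ b) = μ.re * (a ⬝ᵥ a + b ⬝ᵥ b) := by
    rw [hFa', hFb']
    simp only [dotProduct_smul, smul_eq_mul]
    ring
  have hpos : 0 < a ⬝ᵥ (F *ᵥ a) + b ⬝ᵥ (F *ᵥ b) := by
    have hge : ∀ u : n → ℝ, 0 ≤ u ⬝ᵥ (F *ᵥ u) := by
      intro u
      simpa using hF.posSemidef.dotProduct_mulVec_nonneg u
    by_cases hA : a = 0
    · have hb0 : b ≠ 0 := by
        intro hb0
        apply hw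
        funext i
        exact Complex.ext (by simpa using congrFun hA i) (by simpa using congrFun hb0 i)
      have := hF.dotProduct_mulVec_pos (x := b) (by simpa using hb0)
      simp only [star_trivial] at this
      have ha0 : a ⬝ᵥ (F *ᵥ a) = 0 := by rw [hA]; simp
      linarith
    · have := hF.dotProduct_mulVec_pos (x := a) (by simpa using hA)
      simp only [star_trivial] at this
      linarith [hge b]
  have hre : 0 < μ.re := by
    rw [hq] at hpos
    nlinarith [habpos]
  exact ⟨μ.re, hre, by exact Complex.ext (by simp) (by simp [him])⟩


lemma aux_posdef {m n : Type*} [Fintype m] [Fintype n] [DecidableEq m] [DecidableEq n]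
    (C : Matrix m m ℝ) (D : Matrix n n ℝ) (B : Matrix m n ℝ)
    (hC : C.PosDef) (hS : (D - Bᴴ * C⁻¹ * B).PosDef) :
    (fromBlocks C B Bᴴ D).PosDef := by
  haveI := hC.isUnit.invertible
  refine Matrix.PosDef.of_dotProduct_mulVec_pos ((Matrix.IsHermitian.fromBlocks₁₁ B D hC.1).mpr hS.1) ?_
  intro z hz
  have hzelim : z = (z ∘ Sum.inl) ⊕ᵥ (z ∘ Sum.inr) := (Sum.elim_comp_inl_inr z).symm
  set x := z ∘ Sum.inl with hx
  set y := z ∘ Sum.inr with hy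
  rw [Matrix.dotProduct_mulVec, hzelim,
    Matrix.schur_complement_eq₁₁ B D x y hC.1]
  rw [← Matrix.dotProduct_mulVec, ← Matrix.dotProduct_mulVec]
  by_cases hy0 : y = 0
  · have hx0 : x ≠ 0 := by
      intro hx0
      apply hz
      rw [hzelim, hx0, hy0]
      funext i; cases i <;> simp
    have h1 : x + (C⁻¹ * B) *ᵥ y = x := by rw [hy0]; simp
    have h2 : star y ⬝ᵥ ((D - Bᴴ * C⁻¹ * B) *ᵥ y) = 0 := by rw [hy0]; simp
    rw [h1, h2, add_zero]
    exact hC.dotProduct_mulVec_pos (by simpa using hx0)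
  · have h1 : 0 ≤ star (x + (C⁻¹ * B) *ᵥ y) ⬝ᵥ (C *ᵥ (x + (C⁻¹ * B) *ᵥ y)) :=
      hC.posSemidef.dotProduct_mulVec_nonneg _
    have h2 : 0 < star y ⬝ᵥ ((D - Bᴴ * C⁻¹ * B) *ᵥ y) := hS.dotProduct_mulVec_pos hy0
    linarith

/-- if `C` is symmetric positive definite, `D` is symmetric, and
`D − 2 M C⁻¹ Mᵀ` is positive definite, then every complex eigenvalue of
`E = [[C, 2Mᵀ], [M, D]]` is real and positive. -/
theorem stmt14 (k l : ℕ)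
    (C : Matrix (Fin k) (Fin k) ℝ) (D : Matrix (Fin l) (Fin l) ℝ)
    (M : Matrix (Fin l) (Fin k) ℝ)
    (hC : C.PosDef) (hD : D.IsSymm)
    (hSchur : (D - (2 : ℝ) • (M * C⁻¹ * Mᵀ)).PosDef)
    (E : Matrix (Fin k ⊕ Fin l) (Fin k ⊕ Fin l) ℝ)
    (hE : E = Matrix.fromBlocks C ((2 : ℝ) • Mᵀ) M D) :
    ∀ μ : ℂ,
      (μ • (1 : Matrix (Fin k ⊕ Fin l) (Fin k ⊕ Fin l) ℂ) -
          E.map Complex.ofReal).det = 0 → ∃ r : ℝ, 0 < r ∧ μ = (r : ℂ) := by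
  intro μ hdet
  classical
  set s : ℝ := Real.sqrt 2 with hs
  have hspos : 0 < s := Real.sqrt_pos.mpr (by norm_num)
  have hs2 : s * s = 2 := Real.mul_self_sqrt (by norm_num)
  set B : Matrix (Fin k) (Fin l) ℝ := s • Mᵀ with hBdef
  have hBH : Bᴴ = s • M := by
    ext i j
    simp [hBdef, Matrix.conjTranspose_apply]
  -- the symmetrized matrix
  set F : Matrix (Fin k ⊕ Fin l) (Fin k ⊕ Fin l) ℝ := fromBlocks C B Bᴴ D with hFdef
  have hSchur' : (D - Bᴴ * C⁻¹ * B).PosDef := by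
    have : Bᴴ * C⁻¹ * B = (2 : ℝ) • (M * C⁻¹ * Mᵀ) := by
      rw [hBH, hBdef, Matrix.smul_mul, Matrix.smul_mul, Matrix.mul_smul, smul_smul, hs2]
    rwa [this]
  have hFpd : F.PosDef := aux_posdef C D B hC hSchur'
  -- extract an eigenvector
  obtain ⟨v, hv0, hv⟩ := (Matrix.exists_mulVec_eq_zero_iff).mpr hdet
  have heig : (E.map Complex.ofReal) *ᵥ v = μ • v := by
    rw [Matrix.sub_mulVec, sub_eq_zero] at hv
    rw [← hv, Matrix.smul_mulVec, Matrix.one_mulVec]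
  -- block components
  set x : Fin k → ℂ := v ∘ Sum.inl with hx
  set y : Fin l → ℂ := v ∘ Sum.inr with hy
  have hvelim : v = x ⊕ᵥ y := (Sum.elim_comp_inl_inr v).symm
  set Cc := C.map (Complex.ofReal) with hCc
  set Dc := D.map (Complex.ofReal) with hDc
  set Mc := M.map (Complex.ofReal) with hMc
  set Mtc := Mᵀ.map (Complex.ofReal) with hMtc
  have hEmap : E.map Complex.ofReal = fromBlocks Cc ((2:ℂ) • Mtc) Mc Dc := by
    rw [hE]
    ext i j
    cases i <;> cases j <;>
      simp [Matrix.fromBlocks, Matrix.map_apply, hCc, hDc, hMc, hMtc]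
  have heig' : (fromBlocks Cc ((2:ℂ) • Mtc) Mc Dc) *ᵥ (x ⊕ᵥ y) = μ • (x ⊕ᵥ y) := by
    rw [← hEmap, ← hvelim]; exact heig
  rw [Matrix.fromBlocks_mulVec] at heig'
  have h1 : Cc *ᵥ x + ((2:ℂ) • Mtc) *ᵥ y = μ • x := by
    funext i
    have := congrFun heig' (Sum.inl i)
    simpa using this
  have h2 : Mc *ᵥ x + Dc *ᵥ y = μ • y := by
    funext i
    have := congrFun heig' (Sum.inr i)
    simpa using this
  -- scaled eigenvector for F
  set c : ℂ := (s : ℂ) / 2 with hc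
  have hcne : c ≠ 0 := by
    simp [hc]
    exact_mod_cast hspos.ne'
  set w : (Fin k ⊕ Fin l) → ℂ := (c • x) ⊕ᵥ y with hw
  have hwne : w ≠ 0 := by
    intro hw0
    apply hv0
    have hxc : c • x = 0 := by funext i; exact congrFun hw0 (Sum.inl i)
    have hy0 : y = 0 := by funext i; exact congrFun hw0 (Sum.inr i)
    have hx0 : x = 0 := by
      funext i
      have := congrFun hxc i
      simpa [hcne] using this
    rw [hvelim, hx0, hy0]
    funext i; cases i <;> simp
  have hFmap : F.map Complex.ofReal = fromBlocks Cc ((s:ℂ) • Mtc) ((s:ℂ) • Mc) Dc := by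
    rw [hFdef, hBH, hBdef]
    ext i j
    cases i <;> cases j <;>
      simp [Matrix.fromBlocks, Matrix.map_apply, hCc, hDc, hMc, hMtc]
  have hweig : (F.map Complex.ofReal) *ᵥ w = μ • w := by
    rw [hFmap, hw, Matrix.fromBlocks_mulVec]
    simp only [Sum.elim_comp_inl, Sum.elim_comp_inr]
    have htop : Cc *ᵥ (c • x) + ((s:ℂ) • Mtc) *ᵥ y = μ • (c • x) := by
      have e1 : Cc *ᵥ x = μ • x - ((2:ℂ) • Mtc) *ᵥ y := eq_sub_of_add_eq h1
      rw [Matrix.mulVec_smul, e1]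
      rw [Matrix.smul_mulVec, Matrix.smul_mulVec]
      rw [smul_sub, smul_smul, smul_smul]
      have hc2 : c * 2 = (s : ℂ) := by
        rw [hc]; field_simp
      rw [hc2, sub_add_cancel, mul_comm c μ, ← smul_smul]
    have hbot : ((s:ℂ) • Mc) *ᵥ (c • x) + Dc *ᵥ y = μ • y := by
      rw [Matrix.mulVec_smul, Matrix.smul_mulVec, smul_smul]
      have hss : (s : ℂ) * (s : ℂ) = 2 := by exact_mod_cast hs2
      have hsc : (s : ℂ) * c = 1 := by
        rw [hc, mul_div_assoc', hss]
        norm_num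
      rw [mul_comm c (s:ℂ), hsc, one_smul]
      exact h2
    rw [htop, hbot]
    funext i; cases i <;> simp
  exact aux_eig F hFpd μ w hwne hweig
end

section
/- Let n be a positive integer and let D be the n×(n−1) real matrix with entries D_{i,i} = 1 for 1 ≤ i ≤ n−1, D_{i+1,i} = −1 for 1 ≤ i ≤ n−1, and all other entries zero (the one-dimensional discrete difference matrix arising from the MAC discretization with Dirichlet boundary conditions). Then the n² × (2n² − 2n) block matrix B̄ = [I_n ⊗ D, D ⊗ I_n] (where ⊗ denotes the Kronecker product) has rank n² − 1, and hence the null space of B̄ has dimension (n − 1)². -/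
open Matrix Kronecker

namespace Stmt15Aux
variable {n : ℕ}

def j0 (j : Fin (n - 1)) : Fin n := ⟨j, by have := j.isLt; omega⟩
def j1 (j : Fin (n - 1)) : Fin n := ⟨(j : ℕ) + 1, by have := j.isLt; omega⟩

lemma sum_D (D : Matrix (Fin n) (Fin (n - 1)) ℝ)
    (hD : ∀ (i : Fin n) (j : Fin (n - 1)),
      D i j = if (i : ℕ) = (j : ℕ) then 1
        else if (i : ℕ) = (j : ℕ) + 1 then -1 else 0)
    (f : Fin n → ℝ) (j : Fin (n - 1)) :
    ∑ b, D b j * f b = f (j0 j) - f (j1 j) := by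
  have h : ∀ b : Fin n, D b j * f b =
      (if b = j0 j then f b else 0) + (if b = j1 j then -(f b) else 0) := by
    intro b
    rw [hD]
    split_ifs <;> simp_all [Fin.ext_iff, j0, j1]
  rw [Finset.sum_congr rfl (fun b _ => h b), Finset.sum_add_distrib]
  simp [Finset.sum_ite_eq']
  ring

variable (D : Matrix (Fin n) (Fin (n - 1)) ℝ)

lemma mv_inl (hD : ∀ (i : Fin n) (j : Fin (n - 1)),
      D i j = if (i : ℕ) = (j : ℕ) then 1
        else if (i : ℕ) = (j : ℕ) + 1 then -1 else 0) (y : Fin n × Fin n → ℝ)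
    (i : Fin n) (j : Fin (n - 1)) :
    (Matrix.fromCols ((1 : Matrix (Fin n) (Fin n) ℝ) ⊗ₖ D)
      (D ⊗ₖ (1 : Matrix (Fin n) (Fin n) ℝ)))ᵀ.mulVec y (Sum.inl (i, j)) =
      y (i, j0 j) - y (i, j1 j) := by
  have : (Matrix.fromCols ((1 : Matrix (Fin n) (Fin n) ℝ) ⊗ₖ D)
      (D ⊗ₖ (1 : Matrix (Fin n) (Fin n) ℝ)))ᵀ.mulVec y (Sum.inl (i, j)) =
      ∑ b, D b j * y (i, b) := by
    simp [Matrix.mulVec, dotProduct, Matrix.fromCols, Fintype.sum_prod_type,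
      Matrix.one_apply, kroneckerMap_apply, ite_mul, Finset.sum_ite_eq,
      mul_comm]
  rw [this, sum_D D hD]

lemma mv_inr (hD : ∀ (i : Fin n) (j : Fin (n - 1)),
      D i j = if (i : ℕ) = (j : ℕ) then 1
        else if (i : ℕ) = (j : ℕ) + 1 then -1 else 0) (y : Fin n × Fin n → ℝ)
    (i : Fin n) (j : Fin (n - 1)) :
    (Matrix.fromCols ((1 : Matrix (Fin n) (Fin n) ℝ) ⊗ₖ D)
      (D ⊗ₖ (1 : Matrix (Fin n) (Fin n) ℝ)))ᵀ.mulVec y (Sum.inr (j, i)) =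
      y (j0 j, i) - y (j1 j, i) := by
  have : (Matrix.fromCols ((1 : Matrix (Fin n) (Fin n) ℝ) ⊗ₖ D)
      (D ⊗ₖ (1 : Matrix (Fin n) (Fin n) ℝ)))ᵀ.mulVec y (Sum.inr (j, i)) =
      ∑ a, D a j * y (a, i) := by
    simp [Matrix.mulVec, dotProduct, Matrix.fromCols, Fintype.sum_prod_type,
      Matrix.one_apply, kroneckerMap_apply, mul_ite, Finset.sum_ite_eq',
      mul_comm]
  rw [this, sum_D D hD]

lemma const_of_diff (hn : 0 < n) (y : Fin n × Fin n → ℝ)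
    (hcol : ∀ (i : Fin n) (j : Fin (n - 1)), y (i, j0 j) = y (i, j1 j))
    (hrow : ∀ (i : Fin n) (j : Fin (n - 1)), y (j0 j, i) = y (j1 j, i)) :
    ∀ p, y p = y (⟨0, hn⟩, ⟨0, hn⟩) := by
  have hc : ∀ (i : Fin n) (k : ℕ) (hk : k < n), y (i, ⟨k, hk⟩) = y (i, ⟨0, hn⟩) := by
    intro i k
    induction k with
    | zero => intro hk; rfl
    | succ m ih =>
      intro hk
      have hm : m < n - 1 := by omega
      have := hcol i ⟨m, hm⟩
      simp only [j0, j1] at this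
      rw [← this]
      exact ih (by omega)
  have hr : ∀ (i : Fin n) (k : ℕ) (hk : k < n), y (⟨k, hk⟩, i) = y (⟨0, hn⟩, i) := by
    intro i k
    induction k with
    | zero => intro hk; rfl
    | succ m ih =>
      intro hk
      have hm : m < n - 1 := by omega
      have := hrow i ⟨m, hm⟩
      simp only [j0, j1] at this
      rw [← this]
      exact ih (by omega)
  rintro ⟨a, b⟩
  rw [show (a, b) = ((⟨(a:ℕ), a.isLt⟩ : Fin n), b) by simp, hr, hc]

lemma ker_transpose (hn : 0 < n)
    (hD : ∀ (i : Fin n) (j : Fin (n - 1)),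
      D i j = if (i : ℕ) = (j : ℕ) then 1
        else if (i : ℕ) = (j : ℕ) + 1 then -1 else 0) :
    LinearMap.ker (Matrix.fromCols ((1 : Matrix (Fin n) (Fin n) ℝ) ⊗ₖ D)
      (D ⊗ₖ (1 : Matrix (Fin n) (Fin n) ℝ)))ᵀ.mulVecLin =
      Submodule.span ℝ {(fun _ => 1 : Fin n × Fin n → ℝ)} := by
  apply le_antisymm
  · intro y hy
    rw [LinearMap.mem_ker, Matrix.mulVecLin_apply] at hy
    have hcol : ∀ (i : Fin n) (j : Fin (n - 1)), y (i, j0 j) = y (i, j1 j) := by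
      intro i j
      have := congrFun hy (Sum.inl (i, j))
      rw [mv_inl D hD] at this
      simpa [sub_eq_zero] using this
    have hrow : ∀ (i : Fin n) (j : Fin (n - 1)), y (j0 j, i) = y (j1 j, i) := by
      intro i j
      have := congrFun hy (Sum.inr (j, i))
      rw [mv_inr D hD] at this
      simpa [sub_eq_zero] using this
    rw [Submodule.mem_span_singleton]
    exact ⟨y (⟨0, hn⟩, ⟨0, hn⟩), by
      funext p
      simpa using (const_of_diff hn y hcol hrow p).symm⟩
  · rw [Submodule.span_le, Set.singleton_subset_iff]
    rw [SetLike.mem_coe, LinearMap.mem_ker, Matrix.mulVecLin_apply]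
    funext k
    rcases k with ⟨i, j⟩ | ⟨j, i⟩
    · rw [mv_inl D hD]; simp
    · rw [mv_inr D hD]; simp

end Stmt15Aux

/-- with `D` the `n × (n−1)` bidiagonal difference matrix
(`D i i = 1`, `D (i+1) i = −1`), the matrix `B̄ = [I_n ⊗ D, D ⊗ I_n]` has rank
`n² − 1`, and its null space has dimension `(n − 1)²`. -/
theorem stmt15 (n : ℕ) (hn : 0 < n)
    (D : Matrix (Fin n) (Fin (n - 1)) ℝ)
    (hD : ∀ (i : Fin n) (j : Fin (n - 1)),
      D i j = if (i : ℕ) = (j : ℕ) then 1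
        else if (i : ℕ) = (j : ℕ) + 1 then -1 else 0)
    (Bbar : Matrix (Fin n × Fin n)
      ((Fin n × Fin (n - 1)) ⊕ (Fin (n - 1) × Fin n)) ℝ)
    (hB : Bbar = Matrix.fromCols
      ((1 : Matrix (Fin n) (Fin n) ℝ) ⊗ₖ D)
      (D ⊗ₖ (1 : Matrix (Fin n) (Fin n) ℝ))) :
    Bbar.rank = n ^ 2 - 1 ∧
    Module.finrank ℝ (LinearMap.ker Bbar.mulVecLin) = (n - 1) ^ 2 := by
  subst hB
  set B := Matrix.fromCols ((1 : Matrix (Fin n) (Fin n) ℝ) ⊗ₖ D)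
      (D ⊗ₖ (1 : Matrix (Fin n) (Fin n) ℝ)) with hBdef
  -- kernel of the transpose is spanned by the all-ones vector
  have hker1 : Module.finrank ℝ (LinearMap.ker Bᵀ.mulVecLin) = 1 := by
    rw [Stmt15Aux.ker_transpose D hn hD]
    have hne : (fun _ => 1 : Fin n × Fin n → ℝ) ≠ 0 := by
      intro h
      have := congrFun h (⟨0, hn⟩, ⟨0, hn⟩)
      simp at this
    rw [finrank_span_singleton hne]
  -- rank-nullity for the transpose
  have h2 : Bᵀ.rank + 1 = n ^ 2 := by
    have h := LinearMap.finrank_range_add_finrank_ker Bᵀ.mulVecLin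
    rw [hker1] at h
    have hdom : Module.finrank ℝ (Fin n × Fin n → ℝ) = n ^ 2 := by
      simp [Module.finrank_pi, sq]
    rw [hdom] at h
    exact h
  have h3 : B.rank + 1 = n ^ 2 := by rw [← Matrix.rank_transpose]; exact h2
  -- rank-nullity for B itself
  have h4 : B.rank + Module.finrank ℝ (LinearMap.ker B.mulVecLin)
      = n * (n - 1) + (n - 1) * n := by
    have h := LinearMap.finrank_range_add_finrank_ker B.mulVecLin
    have hdom : Module.finrank ℝ ((Fin n × Fin (n - 1)) ⊕ (Fin (n - 1) × Fin n) → ℝ)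
        = n * (n - 1) + (n - 1) * n := by
      simp [Module.finrank_pi]
    rw [hdom] at h
    exact h
  obtain ⟨m, rfl⟩ : ∃ m, n = m + 1 := ⟨n - 1, by omega⟩
  obtain ⟨k, hk⟩ : ∃ k, m * m = k := ⟨_, rfl⟩
  have hsq : (m + 1) ^ 2 = k + 2 * m + 1 := by rw [← hk]; ring
  have hsq2 : ((m + 1) - 1) ^ 2 = k := by rw [← hk]; simp [sq]
  have hprod : (m + 1) * ((m + 1) - 1) + ((m + 1) - 1) * (m + 1)
      = k + m + (k + m) := by rw [← hk]; simp; ring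
  rw [hsq] at h3
  rw [hprod] at h4
  rw [hsq, hsq2]
  omega
end
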